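/- arXiv:2109.11436 — 7 statements merged into one kernel-verified Lean document; each statement's English description precedes it below -/
import Mathlib

section
/- Gauss–Chebyshev quadrature with n nodes is exact for polynomials of degree at most 2n − 1: for every integer n ≥ 1 and every real polynomial p with deg p ≤ 2n − 1, ∫_{−1}^{1} p(t) (1 − t²)^{−1/2} dt = (π/n) ∑_{l=1}^{n} p(t_l), where t_l = cos((l − 1/2)π/n) are the Chebyshev points. -/
open Real Polynomial MeasureTheory

/- ## Integrability of the Chebyshev weight -/

lemma gc_weight_meas :
    Measurable (fun t : ℝ => (Real.sqrt (1 - t ^ 2))⁻¹) :=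
  ((continuous_const.sub (continuous_pow 2)).sqrt.measurable).inv

lemma gc_weight_integrable_right :
    IntervalIntegrable (fun t : ℝ => (Real.sqrt (1 - t ^ 2))⁻¹) volume 0 1 := by
  have hmaj : IntervalIntegrable (fun t : ℝ => (1 - t) ^ (-(1/2) : ℝ)) volume 0 1 := by
    have := (intervalIntegral.intervalIntegrable_rpow' (a := 0) (b := 1) (r := -(1/2))
      (by norm_num)).comp_sub_left 1
    simpa using this.symm
  apply hmaj.mono_fun' gc_weight_meas.aestronglyMeasurable
  · filter_upwards [MeasureTheory.ae_restrict_mem measurableSet_uIoc] with t ht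
    rw [Set.uIoc_of_le (by norm_num : (0:ℝ) ≤ 1)] at ht
    obtain ⟨ht0, ht1⟩ := ht
    have h1t : (0:ℝ) ≤ 1 - t := by linarith
    rw [Real.norm_eq_abs, abs_of_nonneg (by positivity),
      Real.rpow_neg h1t, ← Real.sqrt_eq_rpow]
    rcases eq_or_lt_of_le ht1 with h | h
    · simp [h]
    · have hpos : 0 < Real.sqrt (1 - t) := Real.sqrt_pos.2 (by linarith)
      apply inv_anti₀ hpos
      rw [show (1 : ℝ) - t ^ 2 = (1 - t) * (1 + t) by ring, Real.sqrt_mul h1t]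
      nth_rewrite 1 [show Real.sqrt (1 - t) = Real.sqrt (1 - t) * 1 by ring]
      gcongr
      · nth_rewrite 1 [(Real.sqrt_one).symm]
        exact Real.sqrt_le_sqrt (by linarith)

lemma gc_weight_integrable :
    IntervalIntegrable (fun t : ℝ => (Real.sqrt (1 - t ^ 2))⁻¹) volume (-1) 1 := by
  have hleft : IntervalIntegrable (fun t : ℝ => (Real.sqrt (1 - t ^ 2))⁻¹) volume (-1) 0 := by
    have h1 := (IntervalIntegrable.iff_comp_neg (f := fun t : ℝ => (Real.sqrt (1 - t ^ 2))⁻¹) (a := 0) (b := 1) (by simp)).mp gc_weight_integrable_right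
    simp only [neg_zero] at h1
    have h2 : IntervalIntegrable (fun t : ℝ => (Real.sqrt (1 - t ^ 2))⁻¹) volume 0 (-1) := by
      convert h1 using 2 with t
      ring_nf
    exact h2.symm
  exact hleft.trans gc_weight_integrable_right

lemma gc_integrable (f : ℝ → ℝ) (hf : Continuous f) :
    IntervalIntegrable (fun t : ℝ => f t * (Real.sqrt (1 - t ^ 2))⁻¹) volume (-1) 1 :=
  gc_weight_integrable.continuousOn_mul hf.continuousOn

/- ## The two basic integrals -/

lemma gc_integral_zero :
    ∫ t in (-1 : ℝ)..1, (Real.sqrt (1 - t ^ 2))⁻¹ = Real.pi := by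
  have key := intervalIntegral.integral_eq_sub_of_hasDeriv_right_of_le
    (f := Real.arcsin) (f' := fun t => (Real.sqrt (1 - t ^ 2))⁻¹)
    (by norm_num : (-1 : ℝ) ≤ 1)
    Real.continuous_arcsin.continuousOn
    (fun x hx => by
      have h := Real.hasDerivAt_arcsin (ne_of_gt hx.1) (ne_of_lt hx.2)
      simpa [one_div] using h.hasDerivWithinAt)
    gc_weight_integrable
  rw [key, Real.arcsin_one, Real.arcsin_neg_one]
  ring

lemma gc_integral_cheb (k : ℕ) (hk : 1 ≤ k) :
    ∫ t in (-1 : ℝ)..1, Real.cos (k * Real.arccos t) * (Real.sqrt (1 - t ^ 2))⁻¹ = 0 := by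
  have hcont : Continuous (fun t : ℝ => Real.cos (k * Real.arccos t)) :=
    Real.continuous_cos.comp (continuous_const.mul Real.continuous_arccos)
  have hint := gc_weight_integrable.continuousOn_mul hcont.continuousOn
  have hkR : (k : ℝ) ≠ 0 := Nat.cast_ne_zero.2 (by omega)
  have key := intervalIntegral.integral_eq_sub_of_hasDeriv_right_of_le
    (f := fun t => -(Real.sin (k * Real.arccos t)) / k)
    (f' := fun t => Real.cos (k * Real.arccos t) * (Real.sqrt (1 - t ^ 2))⁻¹)
    (by norm_num : (-1 : ℝ) ≤ 1)
    (((Real.continuous_sin.comp (continuous_const.mul Real.continuous_arccos)).neg.div_const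
      _).continuousOn)
    (fun x hx => by
      have ha := Real.hasDerivAt_arccos (ne_of_gt hx.1) (ne_of_lt hx.2)
      have h1 : HasDerivAt (fun t : ℝ => (k : ℝ) * Real.arccos t)
          ((k : ℝ) * -(1 / Real.sqrt (1 - x ^ 2))) x := ha.const_mul _
      have h2 : HasDerivAt (fun t : ℝ => Real.sin ((k : ℝ) * Real.arccos t))
          (Real.cos ((k : ℝ) * Real.arccos x) * ((k : ℝ) * -(1 / Real.sqrt (1 - x ^ 2)))) x :=
        (Real.hasDerivAt_sin _).comp x h1
      have h3 : HasDerivAt (fun t : ℝ => -(Real.sin ((k : ℝ) * Real.arccos t)) / k)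
          (-(Real.cos ((k : ℝ) * Real.arccos x) * ((k : ℝ) * -(1 / Real.sqrt (1 - x ^ 2)))) / k)
          x := (h2.neg).div_const _
      have heq : -(Real.cos ((k : ℝ) * Real.arccos x) * ((k : ℝ) * -(1 / Real.sqrt (1 - x ^ 2))))
          / k = Real.cos ((k : ℝ) * Real.arccos x) * (Real.sqrt (1 - x ^ 2))⁻¹ := by
        field_simp
      rw [heq] at h3
      exact h3.hasDerivWithinAt)
    hint
  rw [key]
  simp [Real.arccos_one, Real.arccos_neg_one, Real.sin_nat_mul_pi]

/- ## The node sums -/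

lemma gc_Icc_eq_map (n : ℕ) :
    Finset.Icc 1 n = Finset.map ⟨fun i => i + 1, add_left_injective 1⟩ (Finset.range n) := by
  ext x
  simp only [Finset.mem_Icc, Finset.mem_map, Finset.mem_range, Function.Embedding.coeFn_mk]
  constructor
  · rintro ⟨h1, h2⟩; exact ⟨x - 1, by omega, by omega⟩
  · rintro ⟨y, hy, rfl⟩; omega

lemma gc_sum_cheb (n k : ℕ) (hn : 1 ≤ n) (hk : 1 ≤ k) (hk' : k ≤ 2 * n - 1) :
    ∑ l ∈ Finset.Icc 1 n, Real.cos ((k : ℝ) * (((l : ℝ) - 1 / 2) * Real.pi / n)) = 0 := by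
  have hnR : (n : ℝ) ≠ 0 := Nat.cast_ne_zero.2 (by omega)
  have hnpos : (0:ℝ) < n := by positivity
  set c := Real.sin ((k : ℝ) * Real.pi / (2 * n)) with hc
  have hkpos : (0:ℝ) < k := by
    have : (0:ℕ) < k := hk
    exact_mod_cast this
  have hcpos : 0 < c := by
    apply Real.sin_pos_of_pos_of_lt_pi
    · positivity
    · rw [div_lt_iff₀ (by positivity)]
      have hklt : (k : ℝ) < 2 * n := by
        have : k < 2 * n := by omega
        exact_mod_cast this
      calc (k : ℝ) * Real.pi < (2 * n) * Real.pi :=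
            mul_lt_mul_of_pos_right hklt Real.pi_pos
        _ = Real.pi * (2 * n) := by ring
  have key : ∑ l ∈ Finset.Icc 1 n, 2 * c *
      Real.cos ((k : ℝ) * (((l : ℝ) - 1 / 2) * Real.pi / n)) = 0 := by
    have hIcc : ∀ l ∈ Finset.Icc 1 n,
        2 * c * Real.cos ((k : ℝ) * (((l : ℝ) - 1 / 2) * Real.pi / n)) =
        Real.sin ((k : ℝ) * l * Real.pi / n) - Real.sin ((k : ℝ) * ((l : ℝ) - 1) * Real.pi / n) := by
      intro l _
      rw [Real.sin_sub_sin]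
      have e1 : ((k : ℝ) * l * Real.pi / n - (k : ℝ) * ((l : ℝ) - 1) * Real.pi / n) / 2
          = (k : ℝ) * Real.pi / (2 * n) := by field_simp; ring
      have e2 : ((k : ℝ) * l * Real.pi / n + (k : ℝ) * ((l : ℝ) - 1) * Real.pi / n) / 2
          = (k : ℝ) * (((l : ℝ) - 1 / 2) * Real.pi / n) := by field_simp; ring
      rw [e1, e2, hc]
    set sfun : ℕ → ℝ := fun m => Real.sin ((k : ℝ) * (m : ℝ) * Real.pi / n) with hsfun
    have hIcc' : ∀ l ∈ Finset.Icc 1 n,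
        2 * c * Real.cos ((k : ℝ) * (((l : ℝ) - 1 / 2) * Real.pi / n)) =
        sfun l - sfun (l - 1) := by
      intro l hl
      rw [Finset.mem_Icc] at hl
      have hcast : ((l - 1 : ℕ) : ℝ) = (l : ℝ) - 1 := by
        have h1 : 1 ≤ l := hl.1
        push_cast [h1]
        ring
      simp only [hsfun]
      rw [hcast, hIcc l (Finset.mem_Icc.2 hl)]
    rw [Finset.sum_congr rfl hIcc', gc_Icc_eq_map n, Finset.sum_map]
    simp only [Function.Embedding.coeFn_mk, Nat.add_sub_cancel]
    rw [Finset.sum_range_sub sfun n]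
    have h1 : sfun n = 0 := by
      show Real.sin ((k : ℝ) * (n : ℝ) * Real.pi / n) = 0
      have heq : (k : ℝ) * (n : ℝ) * Real.pi / n = (k : ℝ) * Real.pi := by
        field_simp
      rw [heq]
      exact Real.sin_nat_mul_pi k
    have h0 : sfun 0 = 0 := by simp [hsfun]
    rw [h1, h0, sub_zero]
  rw [← Finset.mul_sum] at key
  have h2c : (2 : ℝ) * c ≠ 0 := by positivity
  exact (mul_eq_zero.mp key).resolve_left h2c

/- ## Span of Chebyshev polynomials -/

def gcS (d : ℕ) : Set (Polynomial ℝ) :=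
  Polynomial.Chebyshev.T ℝ '' {j : ℤ | j.natAbs ≤ d}

lemma gcS_mono {d e : ℕ} (h : d ≤ e) : gcS d ⊆ gcS e :=
  Set.image_mono (fun _ hj => le_trans hj h)

lemma gc_X_mul_T_mem (d : ℕ) (j : ℤ) (hj : j.natAbs ≤ d) :
    (X : Polynomial ℝ) * Polynomial.Chebyshev.T ℝ j ∈ Submodule.span ℝ (gcS (d + 1)) := by
  have e : (2 : ℝ) • ((X : Polynomial ℝ) * Polynomial.Chebyshev.T ℝ j)
      = Polynomial.Chebyshev.T ℝ (j + 1) + Polynomial.Chebyshev.T ℝ (j - 1) := by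
    rw [Polynomial.Chebyshev.T_add_one, Polynomial.smul_eq_C_mul]
    rw [show (Polynomial.C (2:ℝ)) = (2 : Polynomial ℝ) from map_ofNat _ 2]
    ring
  have e2 : (X : Polynomial ℝ) * Polynomial.Chebyshev.T ℝ j
      = (1/2 : ℝ) • (Polynomial.Chebyshev.T ℝ (j + 1) + Polynomial.Chebyshev.T ℝ (j - 1)) := by
    rw [← e, smul_smul]
    norm_num
  rw [e2]
  apply Submodule.smul_mem
  apply Submodule.add_mem
  · exact Submodule.subset_span ⟨j + 1, by simp only [Set.mem_setOf_eq]; omega, rfl⟩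
  · exact Submodule.subset_span ⟨j - 1, by simp only [Set.mem_setOf_eq]; omega, rfl⟩

lemma gc_pow_mem (k : ℕ) : (X : Polynomial ℝ) ^ k ∈ Submodule.span ℝ (gcS k) := by
  induction k with
  | zero =>
    apply Submodule.subset_span
    exact ⟨0, by simp [gcS], by simp [Polynomial.Chebyshev.T_zero]⟩
  | succ k ih =>
    have step : ∀ q ∈ Submodule.span ℝ (gcS k),
        (X : Polynomial ℝ) * q ∈ Submodule.span ℝ (gcS (k + 1)) := by
      intro q hq
      induction hq using Submodule.span_induction with
      | mem x hx =>
        obtain ⟨i, hi, rfl⟩ := hx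
        exact gc_X_mul_T_mem k i hi
      | zero => simp
      | add x y _ _ hx hy => rw [mul_add]; exact Submodule.add_mem _ hx hy
      | smul a x _ hx => rw [mul_smul_comm]; exact Submodule.smul_mem _ _ hx
    rw [pow_succ, mul_comm]
    exact step _ ih

/- ## Main theorem -/

/-- Gauss–Chebyshev quadrature with `n` nodes is exact for polynomials of degree
at most `2n - 1`. -/
theorem gauss_chebyshev_quadrature_exact (n : ℕ) (hn : 1 ≤ n) (p : Polynomial ℝ)
    (hp : p.natDegree ≤ 2 * n - 1) :
    (∫ t in (-1 : ℝ)..1, p.eval t * (Real.sqrt (1 - t ^ 2))⁻¹)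
      = Real.pi / n *
        ∑ l ∈ Finset.Icc 1 n, p.eval (Real.cos (((l : ℝ) - 1 / 2) * Real.pi / n)) := by
  have hnR : (n : ℝ) ≠ 0 := Nat.cast_ne_zero.2 (by omega)
  have hmem : p ∈ Submodule.span ℝ (gcS (2 * n - 1)) := by
    rw [p.as_sum_range' (p.natDegree + 1) (Nat.lt_succ_self _)]
    apply Submodule.sum_mem
    intro i hi
    rw [Finset.mem_range] at hi
    rw [← Polynomial.smul_X_eq_monomial]
    exact Submodule.smul_mem _ _
      (Submodule.span_mono (gcS_mono (by omega)) (gc_pow_mem i))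
  clear hp
  induction hmem using Submodule.span_induction with
  | mem q hq =>
    obtain ⟨j, hj, rfl⟩ := hq
    rw [← Polynomial.Chebyshev.T_natAbs]
    set k := j.natAbs with hk
    rcases Nat.eq_zero_or_pos k with h0 | hpos
    · simp only [h0, Nat.cast_zero, Polynomial.Chebyshev.T_zero, Polynomial.eval_one, one_mul]
      rw [gc_integral_zero, Finset.sum_const, Nat.card_Icc]
      simp only [Nat.add_sub_cancel, nsmul_eq_mul, mul_one]
      field_simp
    · have hTeval : ∀ t ∈ Set.Icc (-1:ℝ) 1,
          (Polynomial.Chebyshev.T ℝ (k : ℤ)).eval t = Real.cos (k * Real.arccos t) := by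
        intro t ht
        conv_lhs => rw [← Real.cos_arccos ht.1 ht.2]
        rw [Polynomial.Chebyshev.T_real_cos]
        push_cast
        ring_nf
      have hlhs : (∫ t in (-1:ℝ)..1,
          (Polynomial.Chebyshev.T ℝ (k : ℤ)).eval t * (Real.sqrt (1 - t ^ 2))⁻¹)
          = ∫ t in (-1:ℝ)..1, Real.cos (k * Real.arccos t) * (Real.sqrt (1 - t ^ 2))⁻¹ := by
        apply intervalIntegral.integral_congr
        intro t ht
        rw [Set.uIcc_of_le (by norm_num : (-1:ℝ) ≤ 1)] at ht
        simp only [hTeval t ht]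
      rw [hlhs, gc_integral_cheb k hpos]
      have hrhs : ∀ l ∈ Finset.Icc 1 n,
          (Polynomial.Chebyshev.T ℝ (k : ℤ)).eval
            (Real.cos (((l : ℝ) - 1 / 2) * Real.pi / n))
          = Real.cos ((k : ℝ) * (((l : ℝ) - 1 / 2) * Real.pi / n)) := by
        intro l _
        rw [Polynomial.Chebyshev.T_real_cos]
        push_cast
        ring_nf
      rw [Finset.sum_congr rfl hrhs, gc_sum_cheb n k hn hpos (by have := hj; simp only [Set.mem_setOf_eq] at this; omega)]
      ring
  | zero => simp
  | add x y hx hy ihx ihy =>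
    have hix := gc_integrable (fun t => x.eval t) x.continuous
    have hiy := gc_integrable (fun t => y.eval t) y.continuous
    have hL : (∫ t in (-1:ℝ)..1, (x + y).eval t * (Real.sqrt (1 - t ^ 2))⁻¹)
        = (∫ t in (-1:ℝ)..1, x.eval t * (Real.sqrt (1 - t ^ 2))⁻¹)
          + ∫ t in (-1:ℝ)..1, y.eval t * (Real.sqrt (1 - t ^ 2))⁻¹ := by
      rw [← intervalIntegral.integral_add hix hiy]
      apply intervalIntegral.integral_congr
      intro t _
      simp only [Polynomial.eval_add]
      ring
    rw [hL, ihx, ihy]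
    simp only [Polynomial.eval_add]
    rw [Finset.sum_add_distrib]
    ring
  | smul a x hx ihx =>
    have hix := gc_integrable (fun t => x.eval t) x.continuous
    have hL : (∫ t in (-1:ℝ)..1, (a • x).eval t * (Real.sqrt (1 - t ^ 2))⁻¹)
        = a * ∫ t in (-1:ℝ)..1, x.eval t * (Real.sqrt (1 - t ^ 2))⁻¹ := by
      rw [← intervalIntegral.integral_const_mul]
      apply intervalIntegral.integral_congr
      intro t _
      simp only [Polynomial.eval_smul, smul_eq_mul]
      ring
    rw [hL, ihx]
    simp only [Polynomial.eval_smul, smul_eq_mul]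
    rw [← Finset.mul_sum]
    ring
end

section
/- Discrete orthogonality of Chebyshev polynomials at Chebyshev points: for every integer n ≥ 1 and all natural numbers j, k with 0 ≤ j, k ≤ n − 1, the sum ∑_{l=1}^{n} T_j(t_l) T_k(t_l), where t_l = cos((l − 1/2)π/n), equals 0 if j ≠ k, equals n/2 if j = k ≥ 1, and equals n if j = k = 0. -/
open Real Polynomial

lemma cos_sum_zero (n : ℕ) (hn : 1 ≤ n) (m : ℕ) (hm1 : 1 ≤ m) (hm2 : m < 2 * n) :
    ∑ l ∈ Finset.Icc 1 n, Real.cos ((m : ℝ) * (((l : ℝ) - 1 / 2) * Real.pi / n)) = 0 := by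
  have hn0 : (0:ℝ) < n := by exact_mod_cast hn
  have hs : Real.sin ((m : ℝ) * Real.pi / (2 * n)) ≠ 0 := by
    apply ne_of_gt
    apply Real.sin_pos_of_pos_of_lt_pi
    · have hm0 : (0:ℝ) < m := by exact_mod_cast hm1
      positivity
    · rw [div_lt_iff₀ (by positivity)]
      have : (m:ℝ) < 2 * n := by exact_mod_cast hm2
      nlinarith [Real.pi_pos]
  have key : ∀ i : ℕ, 2 * Real.sin ((m:ℝ)*Real.pi/(2*n)) *
      Real.cos ((m:ℝ) * ((((i:ℝ)+1) - 1/2) * Real.pi / n))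
      = Real.sin ((m:ℝ)*((i:ℝ)+1)*Real.pi/n) - Real.sin ((m:ℝ)*(i:ℝ)*Real.pi/n) := by
    intro i
    have e1 : ((m:ℝ)*((i:ℝ)+1)*Real.pi/n - (m:ℝ)*(i:ℝ)*Real.pi/n)/2 = (m:ℝ)*Real.pi/(2*n) := by
      field_simp; ring
    have e2 : ((m:ℝ)*((i:ℝ)+1)*Real.pi/n + (m:ℝ)*(i:ℝ)*Real.pi/n)/2
        = (m:ℝ) * ((((i:ℝ)+1) - 1/2) * Real.pi / n) := by
      field_simp; ring
    rw [Real.sin_sub_sin, e1, e2]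
  have hre : ∑ l ∈ Finset.Icc 1 n, Real.cos ((m : ℝ) * (((l : ℝ) - 1 / 2) * Real.pi / n))
      = ∑ i ∈ Finset.range n, Real.cos ((m : ℝ) * ((((i:ℝ)+1) - 1 / 2) * Real.pi / n)) := by
    rw [← Finset.Ico_add_one_right_eq_Icc, Finset.sum_Ico_eq_sum_range]
    apply Finset.sum_congr rfl
    intro i _
    push_cast
    ring_nf
  have hmul : 2 * Real.sin ((m:ℝ)*Real.pi/(2*n)) *
      ∑ i ∈ Finset.range n, Real.cos ((m : ℝ) * ((((i:ℝ)+1) - 1 / 2) * Real.pi / n)) = 0 := by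
    rw [Finset.mul_sum]
    have : ∀ i ∈ Finset.range n, 2 * Real.sin ((m:ℝ)*Real.pi/(2*n)) *
        Real.cos ((m : ℝ) * ((((i:ℝ)+1) - 1 / 2) * Real.pi / n))
        = (fun i : ℕ => Real.sin ((m:ℝ)*(i:ℝ)*Real.pi/n)) (i+1)
          - (fun i : ℕ => Real.sin ((m:ℝ)*(i:ℝ)*Real.pi/n)) i := by
      intro i _
      simp only [key i]
      push_cast
      ring_nf
    rw [Finset.sum_congr rfl this]
    rw [Finset.sum_range_sub (fun i : ℕ => Real.sin ((m:ℝ)*(i:ℝ)*Real.pi/n)) n]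
    simp only [Nat.cast_zero, mul_zero, zero_mul, zero_div, Real.sin_zero, sub_zero]
    have : (m:ℝ)*(n:ℝ)*Real.pi/n = m * Real.pi := by field_simp
    rw [this, Real.sin_nat_mul_pi]
  rw [hre]
  have := mul_ne_zero (two_ne_zero (α := ℝ)) hs
  exact (mul_eq_zero.mp hmul).resolve_left this


/-- Discrete orthogonality of Chebyshev polynomials at the Chebyshev points:
for `n ≥ 1` and `0 ≤ j, k ≤ n - 1`, the sum `∑_{l=1}^n T_j(t_l) T_k(t_l)` equals
`0` if `j ≠ k`, equals `n` if `j = k = 0`, and equals `n/2` if `j = k ≥ 1`. -/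
theorem chebyshev_discrete_orthogonality (n : ℕ) (hn : 1 ≤ n) (j k : ℕ)
    (hj : j ≤ n - 1) (hk : k ≤ n - 1) :
    (∑ l ∈ Finset.Icc 1 n,
        (Polynomial.Chebyshev.T ℝ j).eval (Real.cos (((l : ℝ) - 1 / 2) * Real.pi / n)) *
        (Polynomial.Chebyshev.T ℝ k).eval (Real.cos (((l : ℝ) - 1 / 2) * Real.pi / n)))
      = if j = k then (if j = 0 then (n : ℝ) else (n : ℝ) / 2) else 0 := by
  have hjn : j < n := lt_of_le_of_lt hj (Nat.sub_lt hn one_pos)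
  have hkn : k < n := lt_of_le_of_lt hk (Nat.sub_lt hn one_pos)
  set θ : ℕ → ℝ := fun l => ((l : ℝ) - 1 / 2) * Real.pi / n with hθ
  have hT : ∀ (a : ℕ) (l : ℕ),
      (Polynomial.Chebyshev.T ℝ a).eval (Real.cos (θ l)) = Real.cos ((a : ℝ) * θ l) := by
    intro a l
    have := Polynomial.Chebyshev.T_real_cos (θ l) (a : ℤ)
    simpa using this
  have hprod : ∀ l : ℕ,
      Real.cos ((j : ℝ) * θ l) * Real.cos ((k : ℝ) * θ l)
      = (Real.cos (((j + k : ℕ) : ℝ) * θ l) + Real.cos (((j : ℝ) - (k : ℝ)) * θ l)) / 2 := by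
    intro l
    rw [show ((j + k : ℕ) : ℝ) * θ l = (j : ℝ) * θ l + (k : ℝ) * θ l by push_cast; ring,
        show ((j : ℝ) - (k : ℝ)) * θ l = (j : ℝ) * θ l - (k : ℝ) * θ l by ring,
        Real.cos_add, Real.cos_sub]
    ring
  have hmain : ∀ l ∈ Finset.Icc 1 n,
      (Polynomial.Chebyshev.T ℝ j).eval (Real.cos (θ l)) *
      (Polynomial.Chebyshev.T ℝ k).eval (Real.cos (θ l))
      = (Real.cos (((j + k : ℕ) : ℝ) * θ l) + Real.cos (((j : ℝ) - (k : ℝ)) * θ l)) / 2 := by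
    intro l _
    rw [hT, hT, hprod]
  rw [Finset.sum_congr rfl hmain, ← Finset.sum_div, Finset.sum_add_distrib]
  have S0 : ∀ c : ℝ, c = 0 → ∑ l ∈ Finset.Icc 1 n, Real.cos (c * θ l) = n := by
    intro c hc
    simp [hc, Nat.card_Icc]
  by_cases hjk : j = k
  · subst hjk
    have hsum2 : ∑ l ∈ Finset.Icc 1 n, Real.cos (((j : ℝ) - (j : ℝ)) * θ l) = n := by
      simpa using S0 0 rfl
    by_cases hj0 : j = 0
    · subst hj0
      have hsum1 : ∑ l ∈ Finset.Icc 1 n, Real.cos (((0 + 0 : ℕ) : ℝ) * θ l) = n := by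
        simpa using S0 0 rfl
      rw [hsum1, hsum2]
      simp
    · have hsum1 : ∑ l ∈ Finset.Icc 1 n, Real.cos (((j + j : ℕ) : ℝ) * θ l) = 0 := by
        have h0 := cos_sum_zero n hn (j + j) (by omega) (by omega)
        simpa only [hθ] using h0
      rw [hsum1, hsum2]
      simp [hj0]
  · have hsum1 : ∑ l ∈ Finset.Icc 1 n, Real.cos (((j + k : ℕ) : ℝ) * θ l) = 0 := by
      have h0 := cos_sum_zero n hn (j + k) (by omega) (by omega)
      simpa only [hθ] using h0
    have hsum2 : ∑ l ∈ Finset.Icc 1 n, Real.cos (((j : ℝ) - (k : ℝ)) * θ l) = 0 := by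
      rcases lt_or_gt_of_ne hjk with h | h
      · have heq : ∀ l : ℕ, Real.cos (((j : ℝ) - (k : ℝ)) * θ l)
            = Real.cos (((k - j : ℕ) : ℝ) * θ l) := by
          intro l
          rw [show ((j : ℝ) - (k : ℝ)) = -(((k - j : ℕ)) : ℝ) by
            rw [Nat.cast_sub h.le]; ring]
          rw [neg_mul, Real.cos_neg]
        rw [Finset.sum_congr rfl fun l _ => heq l]
        have h0 := cos_sum_zero n hn (k - j) (by omega) (by omega)
        simpa only [hθ] using h0
      · have heq : ∀ l : ℕ, Real.cos (((j : ℝ) - (k : ℝ)) * θ l)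
            = Real.cos (((j - k : ℕ) : ℝ) * θ l) := by
          intro l
          rw [Nat.cast_sub h.le]
        rw [Finset.sum_congr rfl fun l _ => heq l]
        have h0 := cos_sum_zero n hn (j - k) (by omega) (by omega)
        simpa only [hθ] using h0
    rw [hsum1, hsum2]
    simp [hjk]
end

section
/- Exactness of the approximated Chebyshev coefficients for polynomials: let n ≥ 1, let f be a real polynomial, and let j be a natural number with deg f + j ≤ 2n − 1. Then the Gauss–Chebyshev quadrature approximation c_{j,n} := (2/n) ∑_{l=1}^{n} f(t_l) T_j(t_l), with t_l = cos((l − 1/2)π/n), equals the exact Chebyshev coefficient c_j = (2/π) ∫_{−1}^{1} f(t) T_j(t) (1 − t²)^{−1/2} dt. -/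
open Real Polynomial

section AuxChebQuad

lemma T_abs_le' (k : ℕ) {t : ℝ} (h1 : -1 ≤ t) (h2 : t ≤ 1) :
    |(Polynomial.Chebyshev.T ℝ k).eval t| ≤ 1 := by
  have := Polynomial.Chebyshev.T_real_cos (Real.arccos t) k
  rw [Real.cos_arccos h1 h2] at this
  rw [this]
  exact Real.abs_cos_le_one _

lemma T_eval_eq' (k : ℕ) {t : ℝ} (h1 : -1 ≤ t) (h2 : t ≤ 1) :
    (Polynomial.Chebyshev.T ℝ k).eval t = Real.cos (k * Real.arccos t) := by
  have := Polynomial.Chebyshev.T_real_cos (Real.arccos t) k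
  rw [Real.cos_arccos h1 h2] at this
  rw [this]; push_cast; ring_nf

lemma integrable_weight' : IntervalIntegrable (fun t : ℝ => (Real.sqrt (1 - t ^ 2))⁻¹)
    MeasureTheory.volume (-1) 1 := by
  have hmeas : ∀ a b : ℝ, MeasureTheory.AEStronglyMeasurable
      (fun t : ℝ => (Real.sqrt (1 - t ^ 2))⁻¹)
      (MeasureTheory.volume.restrict (Set.uIoc a b)) := by
    intro a b
    exact ((continuous_const.sub (continuous_pow 2)).sqrt.measurable.inv).aestronglyMeasurable
  have hrpow : IntervalIntegrable (fun x : ℝ => x ^ (-(1/2) : ℝ))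
      MeasureTheory.volume 0 1 := intervalIntegral.intervalIntegrable_rpow' (by norm_num)
  have key : ∀ s t : ℝ, 0 < s → s ≤ 1 - t ^ 2 →
      ‖(Real.sqrt (1 - t ^ 2))⁻¹‖ ≤ ‖s ^ (-(1/2) : ℝ)‖ := by
    intro s t hs hst
    rw [Real.norm_eq_abs, Real.norm_eq_abs, abs_inv, abs_of_nonneg (Real.sqrt_nonneg _),
      Real.rpow_neg hs.le, abs_inv, ← Real.sqrt_eq_rpow, abs_of_nonneg (Real.sqrt_nonneg _)]
    exact inv_anti₀ (Real.sqrt_pos.2 hs) (Real.sqrt_le_sqrt hst)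
  have h01 : IntervalIntegrable (fun t : ℝ => (Real.sqrt (1 - t ^ 2))⁻¹)
      MeasureTheory.volume 0 1 := by
    have hcomp : IntervalIntegrable (fun x : ℝ => (1 - x) ^ (-(1/2) : ℝ))
        MeasureTheory.volume 0 1 := by
      have := (hrpow.comp_sub_left 1).symm
      norm_num at this
      exact this
    refine hcomp.mono_fun (hmeas 0 1) ?_
    filter_upwards [MeasureTheory.ae_restrict_mem measurableSet_uIoc] with t ht
    rw [Set.uIoc_of_le (by norm_num : (0:ℝ) ≤ 1)] at ht
    obtain ⟨ht0, ht1⟩ := ht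
    rcases eq_or_lt_of_le ht1 with h1 | h1
    · subst h1
      norm_num [Real.rpow_neg_one]
    · exact key (1 - t) t (by linarith) (by nlinarith)
  have hm0 : IntervalIntegrable (fun t : ℝ => (Real.sqrt (1 - t ^ 2))⁻¹)
      MeasureTheory.volume (-1) 0 := by
    have hcomp : IntervalIntegrable (fun x : ℝ => (1 + x) ^ (-(1/2) : ℝ))
        MeasureTheory.volume (-1) 0 := by
      have := hrpow.comp_add_right 1
      norm_num at this
      simpa [add_comm] using this
    refine hcomp.mono_fun (hmeas (-1) 0) ?_
    filter_upwards [MeasureTheory.ae_restrict_mem measurableSet_uIoc] with t ht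
    rw [Set.uIoc_of_le (by norm_num : (-1:ℝ) ≤ 0)] at ht
    obtain ⟨ht0, ht1⟩ := ht
    exact key (1 + t) t (by linarith) (by nlinarith)
  exact hm0.trans h01

lemma integrable_T_weight' (k : ℕ) :
    IntervalIntegrable (fun t : ℝ => (Polynomial.Chebyshev.T ℝ k).eval t * (Real.sqrt (1 - t ^ 2))⁻¹)
      MeasureTheory.volume (-1) 1 := by
  refine integrable_weight'.mono_fun ?_ ?_
  · exact (((Polynomial.Chebyshev.T ℝ k).continuous_aeval.measurable.mul
      ((continuous_const.sub (continuous_pow 2)).sqrt.measurable.inv)).aestronglyMeasurable)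
  · filter_upwards [MeasureTheory.ae_restrict_mem measurableSet_uIoc] with t ht
    rw [Set.uIoc_of_le (by norm_num : (-1:ℝ) ≤ 1)] at ht
    rw [Real.norm_eq_abs, Real.norm_eq_abs, abs_mul]
    calc |(Polynomial.Chebyshev.T ℝ k).eval t| * |(Real.sqrt (1 - t ^ 2))⁻¹|
        ≤ 1 * |(Real.sqrt (1 - t ^ 2))⁻¹| := by
          gcongr; exact T_abs_le' k (le_of_lt ht.1) ht.2
      _ = |(Real.sqrt (1 - t ^ 2))⁻¹| := one_mul _

lemma integral_T_weight' (k : ℕ) :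
    (∫ t in (-1:ℝ)..1, (Polynomial.Chebyshev.T ℝ k).eval t * (Real.sqrt (1 - t ^ 2))⁻¹)
      = if k = 0 then Real.pi else 0 := by
  rcases Nat.eq_zero_or_pos k with hk | hk
  · subst hk
    rw [if_pos rfl]
    have h0 : (Polynomial.Chebyshev.T ℝ (0:ℕ)) = 1 := by
      exact_mod_cast Polynomial.Chebyshev.T_zero ℝ
    rw [show (∫ t in (-1:ℝ)..1, (Polynomial.Chebyshev.T ℝ (0:ℕ)).eval t * (Real.sqrt (1 - t ^ 2))⁻¹)
        = ∫ t in (-1:ℝ)..1, (Real.sqrt (1 - t ^ 2))⁻¹ by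
      congr 1; funext t; rw [h0]; simp]
    have := intervalIntegral.integral_eq_sub_of_hasDeriv_right_of_le
      (f := Real.arcsin) (f' := fun t => (Real.sqrt (1 - t ^ 2))⁻¹)
      (by norm_num : (-1:ℝ) ≤ 1)
      (Real.continuous_arcsin.continuousOn)
      (fun x hx => by
        have := Real.hasDerivAt_arcsin (ne_of_gt hx.1) (ne_of_lt hx.2)
        rw [one_div] at this
        exact this.hasDerivWithinAt)
      integrable_weight'
    rw [this, Real.arcsin_one, Real.arcsin_neg_one]
    ring
  · rw [if_neg (Nat.pos_iff_ne_zero.1 hk)]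
    set F : ℝ → ℝ := fun t => -(1/(k:ℝ)) * Real.sin (k * Real.arccos t) with hF
    have hk0 : (k:ℝ) ≠ 0 := Nat.cast_ne_zero.2 (Nat.pos_iff_ne_zero.1 hk)
    have hder : ∀ x ∈ Set.Ioo (-1:ℝ) 1, HasDerivWithinAt F
        ((Polynomial.Chebyshev.T ℝ k).eval x * (Real.sqrt (1 - x ^ 2))⁻¹) (Set.Ioi x) x := by
      intro x hx
      have h1 : HasDerivAt Real.arccos (-(1/Real.sqrt (1 - x ^ 2))) x :=
        Real.hasDerivAt_arccos (ne_of_gt hx.1) (ne_of_lt hx.2)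
      have h2 : HasDerivAt (fun t => (k:ℝ) * Real.arccos t)
          ((k:ℝ) * -(1/Real.sqrt (1 - x ^ 2))) x := h1.const_mul _
      have h3 := (Real.hasDerivAt_sin ((k:ℝ) * Real.arccos x)).comp x h2
      have h4 := h3.const_mul (-(1/(k:ℝ)))
      have heq : -(1/(k:ℝ)) * (Real.cos ((k:ℝ) * Real.arccos x) * ((k:ℝ) * -(1/Real.sqrt (1 - x ^ 2))))
          = (Polynomial.Chebyshev.T ℝ k).eval x * (Real.sqrt (1 - x ^ 2))⁻¹ := by
        rw [T_eval_eq' k hx.1.le hx.2.le]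
        have hs : Real.sqrt (1 - x ^ 2) ≠ 0 := by
          refine ne_of_gt (Real.sqrt_pos.2 ?_); nlinarith [hx.1, hx.2]
        field_simp
      rw [heq] at h4
      exact h4.hasDerivWithinAt
    have hcont : ContinuousOn F (Set.Icc (-1:ℝ) 1) :=
      (continuous_const.mul (Real.continuous_sin.comp
        (continuous_const.mul Real.continuous_arccos))).continuousOn
    have := intervalIntegral.integral_eq_sub_of_hasDeriv_right_of_le
      (by norm_num : (-1:ℝ) ≤ 1) hcont hder (integrable_T_weight' k)
    rw [this, hF]
    simp only [Real.arccos_one, Real.arccos_neg_one, mul_zero, Real.sin_zero]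
    rw [Real.sin_nat_mul_pi]
    ring

lemma T_info' : ∀ k : ℕ, (Polynomial.Chebyshev.T ℝ k).natDegree ≤ k ∧
    (Polynomial.Chebyshev.T ℝ k).coeff k = if k = 0 then 1 else 2^(k-1) := by
  intro k
  induction k using Nat.strong_induction_on with
  | _ k ih =>
    match k with
    | 0 => simp [Polynomial.Chebyshev.T_zero]
    | 1 =>
      constructor
      · simpa [Polynomial.Chebyshev.T_one] using Polynomial.natDegree_X_le
      · simp [Polynomial.Chebyshev.T_one]
    | (m+2) =>
      obtain ⟨hd1, hc1⟩ := ih (m+1) (by omega)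
      obtain ⟨hd0, hc0⟩ := ih m (by omega)
      have hrec : Polynomial.Chebyshev.T ℝ ((m+2 : ℕ) : ℤ)
          = 2 * Polynomial.X * Polynomial.Chebyshev.T ℝ ((m+1 : ℕ) : ℤ)
            - Polynomial.Chebyshev.T ℝ (m : ℕ) := by
        have := Polynomial.Chebyshev.T_add_two ℝ (m : ℤ)
        push_cast
        push_cast at this
        exact this
      constructor
      · rw [hrec]
        refine le_trans (Polynomial.natDegree_sub_le _ _) ?_
        refine max_le ?_ (le_trans hd0 (by omega))
        refine le_trans (Polynomial.natDegree_mul_le) ?_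
        have h2X : (2 * Polynomial.X : ℝ[X]).natDegree ≤ 1 := by
          refine le_trans (Polynomial.natDegree_mul_le) ?_
          simp
        omega
      · rw [hrec]
        rw [Polynomial.coeff_sub, mul_assoc]
        have : ((2 : ℝ[X]) * (Polynomial.X * Polynomial.Chebyshev.T ℝ ((m+1:ℕ) : ℤ))).coeff (m+2)
            = 2 * (Polynomial.X * Polynomial.Chebyshev.T ℝ ((m+1:ℕ) : ℤ)).coeff (m+2) := by
          have h2 : (2 : ℝ[X]) = Polynomial.C 2 := by
            rw [map_ofNat]
          rw [h2, Polynomial.coeff_C_mul]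
        rw [this, show (m+2) = (m+1)+1 from rfl, Polynomial.coeff_X_mul, hc1,
          Polynomial.coeff_eq_zero_of_natDegree_lt (lt_of_le_of_lt hd0 (by omega))]
        simp [pow_succ]
        ring

lemma cheb_span' : ∀ (m : ℕ) (p : ℝ[X]), p.natDegree ≤ m →
    ∃ a : ℕ → ℝ, p = ∑ k ∈ Finset.range (m+1),
      Polynomial.C (a k) * Polynomial.Chebyshev.T ℝ k := by
  intro m
  induction m with
  | zero =>
    intro p hp
    refine ⟨fun _ => p.coeff 0, ?_⟩
    rw [Polynomial.eq_C_of_natDegree_le_zero hp]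
    simp [Polynomial.Chebyshev.T_zero]
  | succ m ih =>
    intro p hp
    set c := p.coeff (m+1) / 2^m with hc
    set q := p - Polynomial.C c * Polynomial.Chebyshev.T ℝ ((m+1 : ℕ) : ℤ) with hq
    obtain ⟨hdT, hcT⟩ := T_info' (m+1)
    have hqdeg : q.natDegree ≤ m := by
      rw [Polynomial.natDegree_le_iff_coeff_eq_zero]
      intro i hi
      rw [hq, Polynomial.coeff_sub, Polynomial.coeff_C_mul]
      rcases eq_or_lt_of_le (Nat.succ_le_of_lt hi) with h | h
      · rw [← h, hcT]
        simp only [Nat.add_eq_zero, and_false, if_false, Nat.add_sub_cancel]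
        rw [hc]
        field_simp
        simp
      · have h1 : p.coeff i = 0 :=
          Polynomial.coeff_eq_zero_of_natDegree_lt (lt_of_le_of_lt hp h)
        have h2 : (Polynomial.Chebyshev.T ℝ ((m+1:ℕ):ℤ)).coeff i = 0 :=
          Polynomial.coeff_eq_zero_of_natDegree_lt (lt_of_le_of_lt hdT h)
        rw [h1, h2]; ring
    obtain ⟨a, ha⟩ := ih q hqdeg
    refine ⟨fun k => if k = m+1 then c else a k, ?_⟩
    rw [Finset.sum_range_succ]
    have hrw : ∑ k ∈ Finset.range (m+1),
        Polynomial.C (if k = m+1 then c else a k) * Polynomial.Chebyshev.T ℝ k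
        = ∑ k ∈ Finset.range (m+1), Polynomial.C (a k) * Polynomial.Chebyshev.T ℝ k := by
      refine Finset.sum_congr rfl (fun k hk => ?_)
      rw [if_neg (by have := Finset.mem_range.1 hk; omega)]
    rw [hrw, ← ha, hq]
    beta_reduce
    rw [if_pos rfl]
    ring

lemma cos_sum' (n k : ℕ) (hn : 1 ≤ n) (hk1 : 1 ≤ k) (hk2 : k ≤ 2*n-1) :
    ∑ l ∈ Finset.Icc 1 n, Real.cos ((k:ℝ) * (((l:ℝ) - 1/2) * Real.pi / n)) = 0 := by
  have hn0 : (n:ℝ) ≠ 0 := Nat.cast_ne_zero.2 (by omega)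
  have hnpos : (0:ℝ) < n := by positivity
  set s := Real.sin ((k:ℝ) * Real.pi / (2*n)) with hs_def
  have hklt : (k:ℝ) < 2*n := by
    have : k < 2*n := by omega
    exact_mod_cast this
  have hkpos : (0:ℝ) < k := by
    have : 0 < k := hk1
    exact_mod_cast this
  have hs : 0 < s := by
    apply Real.sin_pos_of_pos_of_lt_pi
    · positivity
    · rw [div_lt_iff₀ (by positivity)]
      calc (k:ℝ) * Real.pi < (2*n) * Real.pi := by
            exact mul_lt_mul_of_pos_right hklt Real.pi_pos
        _ = Real.pi * (2*n) := by ring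
  have key : ∀ i : ℕ,
      Real.sin ((k:ℝ)*(i+1)*Real.pi/n) - Real.sin ((k:ℝ)*i*Real.pi/n)
        = 2 * s * Real.cos ((k:ℝ) * ((((1+i:ℕ):ℝ)) - 1/2) * Real.pi / n) := by
    intro i
    rw [Real.sin_sub_sin]
    push_cast
    congr 1
    · congr 1
      rw [hs_def]
      congr 1
      field_simp
      ring
    · congr 1
      field_simp
      ring
  have hicc : ∑ l ∈ Finset.Icc 1 n, Real.cos ((k:ℝ) * (((l:ℝ) - 1/2) * Real.pi / n))
      = ∑ i ∈ Finset.range n, Real.cos ((k:ℝ) * ((((1+i:ℕ):ℝ)) - 1/2) * Real.pi / n) := by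
    rw [← Finset.Ico_add_one_right_eq_Icc, Finset.sum_Ico_eq_sum_range]
    refine Finset.sum_congr rfl (fun i _ => ?_)
    push_cast
    ring_nf
  have hend : Real.sin ((k:ℝ)*(n:ℕ)*Real.pi/n) = 0 := by
    rw [show (k:ℝ)*(n:ℕ)*Real.pi/n = (k:ℝ)*Real.pi by field_simp]
    exact Real.sin_nat_mul_pi k
  have hsum2 : 2 * s * ∑ l ∈ Finset.Icc 1 n, Real.cos ((k:ℝ) * (((l:ℝ) - 1/2) * Real.pi / n)) = 0 := by
    rw [hicc, Finset.mul_sum]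
    rw [show ∑ i ∈ Finset.range n, 2 * s * Real.cos ((k:ℝ) * ((((1+i:ℕ):ℝ)) - 1/2) * Real.pi / n)
        = ∑ i ∈ Finset.range n, (Real.sin ((k:ℝ)*(i+1)*Real.pi/n) - Real.sin ((k:ℝ)*i*Real.pi/n))
      from Finset.sum_congr rfl (fun i _ => (key i).symm)]
    have : ∑ i ∈ Finset.range n, (Real.sin ((k:ℝ)*(i+1)*Real.pi/n) - Real.sin ((k:ℝ)*i*Real.pi/n))
        = Real.sin ((k:ℝ)*(n:ℕ)*Real.pi/n) - Real.sin ((k:ℝ)*(0:ℕ)*Real.pi/n) := by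
      have := Finset.sum_range_sub (fun i : ℕ => Real.sin ((k:ℝ)*i*Real.pi/n)) n
      simpa using this
    rw [this, hend]
    simp
  have h2s : (2 : ℝ) * s ≠ 0 := by positivity
  exact (mul_eq_zero.1 hsum2).resolve_left h2s

lemma node_sum' (n k : ℕ) (hn : 1 ≤ n) (hk : k ≤ 2*n-1) :
    ∑ l ∈ Finset.Icc 1 n,
        (Polynomial.Chebyshev.T ℝ k).eval (Real.cos (((l:ℝ) - 1/2) * Real.pi / n))
      = if k = 0 then (n:ℝ) else 0 := by
  have heval : ∀ θ:ℝ, (Polynomial.Chebyshev.T ℝ k).eval (Real.cos θ) = Real.cos ((k:ℝ) * θ) := by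
    intro θ
    have := Polynomial.Chebyshev.T_real_cos θ (k:ℤ)
    rw [this]
    push_cast
    ring_nf
  simp only [heval]
  rcases Nat.eq_zero_or_pos k with hk0 | hk0
  · subst hk0
    simp only [Nat.cast_zero, zero_mul, Real.cos_zero, if_pos rfl]
    rw [Finset.sum_const, Nat.card_Icc]
    simp
  · rw [if_neg (Nat.pos_iff_ne_zero.1 hk0)]
    exact cos_sum' n k hn hk0 hk

end AuxChebQuad

/-- Exactness of the approximated Chebyshev coefficients for polynomials: if
`deg f + j ≤ 2n - 1`, then the Gauss–Chebyshev quadrature approximation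
`c_{j,n} = (2/n) ∑_{l=1}^n f(t_l) T_j(t_l)` equals the exact coefficient
`c_j = (2/π) ∫_{-1}^1 f(t) T_j(t) (1-t²)^{-1/2} dt`. -/
theorem approx_chebyshev_coeff_exact (n : ℕ) (hn : 1 ≤ n) (f : Polynomial ℝ) (j : ℕ)
    (h : f.natDegree + j ≤ 2 * n - 1) :
    (2 / (n : ℝ)) *
        ∑ l ∈ Finset.Icc 1 n,
          f.eval (Real.cos (((l : ℝ) - 1 / 2) * Real.pi / n)) *
          (Polynomial.Chebyshev.T ℝ j).eval (Real.cos (((l : ℝ) - 1 / 2) * Real.pi / n))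
      = (2 / Real.pi) *
        ∫ t in (-1 : ℝ)..1,
          f.eval t * (Polynomial.Chebyshev.T ℝ j).eval t * (Real.sqrt (1 - t ^ 2))⁻¹ := by
  have hn0 : (n:ℝ) ≠ 0 := Nat.cast_ne_zero.2 (by omega)
  set m := 2 * n - 1 with hm
  set g : ℝ[X] := f * Polynomial.Chebyshev.T ℝ j with hg
  have hdeg : g.natDegree ≤ m := by
    refine le_trans (Polynomial.natDegree_mul_le) (le_trans ?_ h)
    have := (T_info' j).1
    omega
  obtain ⟨a, ha⟩ := cheb_span' m g hdeg
  have hgev : ∀ t : ℝ, f.eval t * (Polynomial.Chebyshev.T ℝ j).eval t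
      = ∑ k ∈ Finset.range (m+1), a k * (Polynomial.Chebyshev.T ℝ k).eval t := by
    intro t
    rw [← Polynomial.eval_mul, ← hg, ha, Polynomial.eval_finset_sum]
    refine Finset.sum_congr rfl (fun k _ => ?_)
    rw [Polynomial.eval_mul, Polynomial.eval_C]
  -- sum side
  have hLsum : ∑ l ∈ Finset.Icc 1 n,
      f.eval (Real.cos (((l : ℝ) - 1 / 2) * Real.pi / n)) *
        (Polynomial.Chebyshev.T ℝ j).eval (Real.cos (((l : ℝ) - 1 / 2) * Real.pi / n))
      = a 0 * n := by
    calc ∑ l ∈ Finset.Icc 1 n,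
        f.eval (Real.cos (((l : ℝ) - 1 / 2) * Real.pi / n)) *
          (Polynomial.Chebyshev.T ℝ j).eval (Real.cos (((l : ℝ) - 1 / 2) * Real.pi / n))
        = ∑ l ∈ Finset.Icc 1 n, ∑ k ∈ Finset.range (m+1),
            a k * (Polynomial.Chebyshev.T ℝ k).eval (Real.cos (((l : ℝ) - 1 / 2) * Real.pi / n)) :=
          Finset.sum_congr rfl (fun l _ => hgev _)
      _ = ∑ k ∈ Finset.range (m+1), ∑ l ∈ Finset.Icc 1 n,
            a k * (Polynomial.Chebyshev.T ℝ k).eval (Real.cos (((l : ℝ) - 1 / 2) * Real.pi / n)) :=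
          Finset.sum_comm
      _ = ∑ k ∈ Finset.range (m+1), a k * (if k = 0 then (n:ℝ) else 0) := by
          refine Finset.sum_congr rfl (fun k hk => ?_)
          rw [← Finset.mul_sum, node_sum' n k hn (by have := Finset.mem_range.1 hk; omega)]
      _ = a 0 * n := by
          rw [Finset.sum_eq_single_of_mem 0 (Finset.mem_range.2 (by omega))]
          · rw [if_pos rfl]
          · intro k _ hk0
            rw [if_neg hk0, mul_zero]
  -- integral side
  have hIint : (∫ t in (-1:ℝ)..1,
      f.eval t * (Polynomial.Chebyshev.T ℝ j).eval t * (Real.sqrt (1 - t ^ 2))⁻¹)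
      = a 0 * Real.pi := by
    have hfun : (fun t : ℝ => f.eval t * (Polynomial.Chebyshev.T ℝ j).eval t *
        (Real.sqrt (1 - t ^ 2))⁻¹)
        = fun t : ℝ => ∑ k ∈ Finset.range (m+1),
            a k * ((Polynomial.Chebyshev.T ℝ k).eval t * (Real.sqrt (1 - t ^ 2))⁻¹) := by
      funext t
      rw [hgev t, Finset.sum_mul]
      refine Finset.sum_congr rfl (fun k _ => ?_)
      ring
    rw [intervalIntegral.integral_congr (g := fun t : ℝ => ∑ k ∈ Finset.range (m+1),
        a k * ((Polynomial.Chebyshev.T ℝ k).eval t * (Real.sqrt (1 - t ^ 2))⁻¹))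
        (fun t _ => congrFun hfun t)]
    rw [intervalIntegral.integral_finset_sum
      (fun k _ => (integrable_T_weight' k).const_mul (a k))]
    calc ∑ k ∈ Finset.range (m+1), ∫ t in (-1:ℝ)..1,
          a k * ((Polynomial.Chebyshev.T ℝ k).eval t * (Real.sqrt (1 - t ^ 2))⁻¹)
        = ∑ k ∈ Finset.range (m+1), a k * (if k = 0 then Real.pi else 0) := by
          refine Finset.sum_congr rfl (fun k _ => ?_)
          rw [intervalIntegral.integral_const_mul, integral_T_weight' k]
      _ = a 0 * Real.pi := by
          rw [Finset.sum_eq_single_of_mem 0 (Finset.mem_range.2 (by omega))]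
          · rw [if_pos rfl]
          · intro k _ hk0
            rw [if_neg hk0, mul_zero]
  rw [hLsum, hIint]
  field_simp
end

section
/- High-index Chebyshev coefficients of a product: let N, n_q be natural numbers, let c_0, …, c_N and q_0, …, q_{n_q} be real numbers, and set f = (c_0/2)·T_0 + ∑_{i=1}^{N} c_i T_i and Q = ∑_{j=0}^{n_q} q_j T_j (polynomials in ℝ[X]). Then for every integer k ≥ n_q + 1, the coefficient of T_k in the expansion of the product Q·f in the Chebyshev basis equals (1/2) ∑_{j=0}^{n_q} (c_{k−j} + c_{k+j}) q_j, where c_m is interpreted as 0 for m > N. -/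
open Polynomial Polynomial.Chebyshev Finset

lemma T_ndeg_aux : ∀ n : ℕ, (T ℝ n).natDegree ≤ n ∧ (T ℝ (n+1)).natDegree ≤ n+1 ∧
    0 < (T ℝ n).coeff n ∧ 0 < (T ℝ (n+1)).coeff (n+1) := by
  intro n
  induction n with
  | zero => simp [T_zero, T_one]
  | succ n ih =>
    obtain ⟨h1, h2, h3, h4⟩ := ih
    have hcast : ((n+1+1 : ℕ) : ℤ) = (n : ℤ) + 2 := by push_cast; ring
    have hT : T ℝ ((n+1+1 : ℕ) : ℤ) = 2 * X * T ℝ (n+1) - T ℝ n := by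
      rw [hcast, T_add_two]
    have hd : (T ℝ ((n+1+1:ℕ) : ℤ)).natDegree ≤ n + 2 := by
      rw [hT]
      refine (natDegree_sub_le _ _).trans ?_
      simp only [max_le_iff]
      constructor
      · refine (natDegree_mul_le).trans ?_
        have : (2 * X : ℝ[X]).natDegree ≤ 1 := by
          refine natDegree_mul_le.trans ?_; simp
        omega
      · omega
    have hc : (T ℝ ((n+1+1:ℕ) : ℤ)).coeff (n+2) = 2 * (T ℝ (n+1)).coeff (n+1) := by
      rw [hT]
      rw [coeff_sub, coeff_eq_zero_of_natDegree_lt (by omega : (T ℝ (n:ℤ)).natDegree < n+2)]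
      rw [mul_assoc, coeff_ofNat_mul, coeff_X_mul]
      ring
    exact ⟨h2, hd, h4, by
      have : ((n+1:ℕ):ℤ)+1 = ((n+1+1:ℕ):ℤ) := by push_cast; ring
      rw [this, show n+1+1 = n+2 from rfl, hc]; linarith⟩

lemma cheb_coeff_zero : ∀ (M : ℕ) (a : ℕ → ℝ),
    (∑ k ∈ range M, C (a k) * T ℝ k) = 0 → ∀ k < M, a k = 0 := by
  intro M
  induction M with
  | zero => intro a _ k hk; omega
  | succ M ih =>
    intro a h k hk
    have hM : a M = 0 := by
      have h2 := congrArg (fun p : ℝ[X] => p.coeff M) h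
      simp only [finset_sum_coeff, coeff_C_mul, coeff_zero] at h2
      rw [Finset.sum_range_succ] at h2
      have hz : ∀ j ∈ range M, a j * (T ℝ j).coeff M = 0 := by
        intro j hj
        rw [mem_range] at hj
        rw [coeff_eq_zero_of_natDegree_lt (lt_of_le_of_lt (T_ndeg_aux j).1 hj), mul_zero]
      rw [Finset.sum_eq_zero hz, zero_add] at h2
      exact (mul_eq_zero.mp h2).resolve_right (ne_of_gt (T_ndeg_aux M).2.2.1)
    rcases Nat.lt_succ_iff_lt_or_eq.mp hk with hlt | heq
    · refine ih a ?_ k hlt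
      rw [Finset.sum_range_succ, hM] at h
      simpa using h
    · rw [heq]; exact hM

lemma single_exp (M m : ℕ) (hm : m < M) (a : ℝ) :
    C a * T ℝ m = ∑ k ∈ range M, C (if k = m then a else 0) * T ℝ k := by
  have hcong : ∀ k ∈ range M, C (if k = m then a else 0) * T ℝ k
      = if k = m then C a * T ℝ k else 0 := by
    intro k _; split_ifs <;> simp
  rw [Finset.sum_congr rfl hcong, Finset.sum_ite_eq' (range M) m (fun k => C a * T ℝ k)]
  simp [Finset.mem_range.mpr hm]

lemma T_mul_T_nat (i j : ℕ) : T ℝ i * T ℝ j =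
    C (2⁻¹ : ℝ) * (T ℝ ((i+j : ℕ) : ℤ) + T ℝ ((Nat.dist i j : ℕ) : ℤ)) := by
  have h := Polynomial.Chebyshev.T_mul_T ℝ (i:ℤ) (j:ℤ)
  have hd : T ℝ ((i:ℤ) - j) = T ℝ ((Nat.dist i j : ℕ) : ℤ) := by
    have hdist : Nat.dist i j = i - j + (j - i) := rfl
    rcases le_total j i with hle | hle
    · congr 1; omega
    · rw [← T_neg]; congr 1; omega
  have h2 : (C (2⁻¹ : ℝ)) * 2 = (1 : ℝ[X]) := by
    rw [← map_ofNat Polynomial.C 2, ← Polynomial.C_mul]; norm_num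
  have hcast : ((i+j:ℕ):ℤ) = (i:ℤ) + j := by push_cast; ring
  rw [hcast, ← hd, ← h]
  rw [show (2:ℝ[X]) * T ℝ (i:ℤ) * T ℝ (j:ℤ) = 2 * (T ℝ (i:ℤ) * T ℝ (j:ℤ)) from by ring,
    ← mul_assoc, h2, one_mul]

/-- High-index Chebyshev coefficients of a product: with
`f = (c_0/2)·T_0 + ∑_{i=1}^N c_i T_i` and `Q = ∑_{j=0}^{n_q} q_j T_j`, if
`Q·f = ∑_k b_k T_k` is the (unique) Chebyshev-basis expansion, then for every
`k ≥ n_q + 1` one has `b_k = (1/2) ∑_{j=0}^{n_q} (c_{k-j} + c_{k+j}) q_j`,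
where `c_m` is interpreted as `0` for `m > N`. -/
theorem chebyshev_product_high_index_coeff (N nq : ℕ) (c q b : ℕ → ℝ)
    (f Q : Polynomial ℝ)
    (hf : f = Polynomial.C (c 0 / 2) * Polynomial.Chebyshev.T ℝ 0 +
        ∑ i ∈ Finset.Icc 1 N, Polynomial.C (c i) * Polynomial.Chebyshev.T ℝ i)
    (hQ : Q = ∑ j ∈ Finset.range (nq + 1), Polynomial.C (q j) * Polynomial.Chebyshev.T ℝ j)
    (hb0 : ∀ k : ℕ, N + nq < k → b k = 0)
    (hexp : Q * f = ∑ k ∈ Finset.range (N + nq + 1),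
        Polynomial.C (b k) * Polynomial.Chebyshev.T ℝ k)
    (k : ℕ) (hk : nq + 1 ≤ k) :
    b k = (1 / 2) * ∑ j ∈ Finset.range (nq + 1),
        ((if k - j ≤ N then c (k - j) else 0) + (if k + j ≤ N then c (k + j) else 0)) * q j := by
  set M := N + nq + 1 with hM
  set c' : ℕ → ℝ := fun i => if i = 0 then c 0 / 2 else c i with hc'
  set E : ℕ → ℝ := fun k' => ∑ j ∈ range (nq+1), ∑ i ∈ range (N+1),
      q j * c' i * 2⁻¹ * ((if k' = j + i then 1 else 0) + (if k' = Nat.dist j i then 1 else 0))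
    with hE
  -- rewrite f in uniform form
  have hf' : f = ∑ i ∈ Finset.range (N+1), C (c' i) * T ℝ i := by
    rw [hf, Finset.sum_range_succ', ← Finset.Ico_add_one_right_eq_Icc, Finset.sum_Ico_eq_sum_range]
    simp only [hc']
    rw [add_comm]
    congr 1
    · refine Finset.sum_congr (by norm_num) fun i _ => ?_
      simp [Nat.add_comm 1 i]
  -- expansion of each elementary product
  have key : ∀ j ∈ range (nq+1), ∀ i ∈ range (N+1),
      (C (q j) * T ℝ j) * (C (c' i) * T ℝ i)
        = ∑ k' ∈ range M, C (q j * c' i * 2⁻¹ *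
            ((if k' = j + i then 1 else 0) + (if k' = Nat.dist j i then 1 else 0))) * T ℝ k' := by
    intro j hj i hi
    rw [mem_range] at hj hi
    have hdist : Nat.dist j i = j - i + (i - j) := rfl
    have h1 : j + i < M := by omega
    have h2 : Nat.dist j i < M := by omega
    have e1 : (C (q j) * T ℝ j) * (C (c' i) * T ℝ i)
        = C (q j * c' i) * (T ℝ (j:ℤ) * T ℝ (i:ℤ)) := by rw [Polynomial.C_mul]; ring
    rw [e1, T_mul_T_nat, ← mul_assoc, ← Polynomial.C_mul, mul_add,
      single_exp M (j+i) h1 (q j * c' i * 2⁻¹), single_exp M (Nat.dist j i) h2 (q j * c' i * 2⁻¹),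
      ← Finset.sum_add_distrib]
    refine Finset.sum_congr rfl fun k' _ => ?_
    rw [← add_mul, ← C_add]
    congr 2
    split_ifs <;> ring
  -- full expansion of Q * f
  have hQf : Q * f = ∑ k' ∈ range M, C (E k') * T ℝ k' := by
    rw [hQ, hf', Finset.sum_mul_sum]
    rw [Finset.sum_congr rfl (fun j hj => Finset.sum_congr rfl (fun i hi => key j hj i hi))]
    rw [Finset.sum_congr rfl (fun j _ => Finset.sum_comm), Finset.sum_comm]
    refine Finset.sum_congr rfl fun k' _ => ?_
    rw [hE, map_sum, Finset.sum_mul]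
    refine Finset.sum_congr rfl fun j _ => ?_
    rw [map_sum, Finset.sum_mul]
  -- uniqueness of coefficients
  have hbE : ∀ k' < M, b k' = E k' := by
    intro k' hk'
    have h0 : (∑ k'' ∈ range M, C (b k'' - E k'') * T ℝ k'') = 0 := by
      have : (∑ k'' ∈ range M, C (b k'') * T ℝ k'') = ∑ k'' ∈ range M, C (E k'') * T ℝ k'' := by
        rw [← hQf, hM]; exact hexp.symm
      simp only [map_sub, sub_mul, Finset.sum_sub_distrib, this, sub_self]
    have := cheb_coeff_zero M _ h0 k' hk'
    linarith
  by_cases hkM : k < M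
  · rw [hbE k hkM, hE]
    rw [Finset.mul_sum]
    refine Finset.sum_congr rfl fun j hj => ?_
    rw [mem_range] at hj
    have hjk : j < k := by omega
    have step : ∀ i ∈ range (N+1),
        q j * c' i * 2⁻¹ * ((if k = j + i then 1 else 0) + (if k = Nat.dist j i then 1 else 0))
        = (if i = k - j then q j * c' i * 2⁻¹ else 0)
          + (if i = j + k then q j * c' i * 2⁻¹ else 0) := by
      intro i _
      have hdist : Nat.dist j i = j - i + (i - j) := rfl
      rw [hdist]
      split_ifs <;> first | ring1 | (exfalso; omega)
    rw [Finset.sum_congr rfl step, Finset.sum_add_distrib,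
      Finset.sum_ite_eq' (range (N+1)) (k-j) (fun i => q j * c' i * 2⁻¹),
      Finset.sum_ite_eq' (range (N+1)) (j+k) (fun i => q j * c' i * 2⁻¹)]
    have hc1 : c' (k - j) = c (k - j) := by rw [hc']; simp only []; rw [if_neg (by omega)]
    have hc2 : c' (j + k) = c (j + k) := by rw [hc']; simp only []; rw [if_neg (by omega)]
    simp only [mem_range, Nat.lt_succ_iff, hc1, hc2]
    have : j + k = k + j := by omega
    rw [this]
    split_ifs <;> ring
  · rw [hb0 k (by omega)]
    have : ∀ j ∈ range (nq+1),
        ((if k - j ≤ N then c (k - j) else 0) + (if k + j ≤ N then c (k + j) else 0)) * q j = 0 := by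
      intro j hj
      rw [mem_range] at hj
      rw [if_neg (by omega), if_neg (by omega)]
      ring
    rw [Finset.sum_congr rfl this]
    simp
end

section
/- Exactness of the approximated bivariate Chebyshev coefficients for polynomials: let n_x, n_y ≥ 1 be integers, let f(x, y) be a real polynomial in two variables, and let i, j be natural numbers such that deg_x f + i ≤ 2n_x − 1 and deg_y f + j ≤ 2n_y − 1. Then the quadrature approximation c_{i,j,n_x,n_y} := (ε_{i,j}/(n_x n_y)) ∑_{l_x=1}^{n_x} ∑_{l_y=1}^{n_y} f(t_{l_x}, t_{l_y}) T_i(t_{l_x}) T_j(t_{l_y}) equals the exact coefficient c_{i,j} = (ε_{i,j}/π²) ∫_{−1}^{1} ∫_{−1}^{1} f(x, y) T_i(x) T_j(y) (1 − x²)^{−1/2} (1 − y²)^{−1/2} dx dy. -/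
open Real Polynomial MeasureTheory Set

/-! ### Auxiliary lemmas for Gauss–Chebyshev quadrature exactness -/

lemma cheb_eval_pair (f : MvPolynomial (Fin 2) ℝ) (a b : ℝ) :
    MvPolynomial.eval ![a, b] f
      = ∑ d ∈ f.support, MvPolynomial.coeff d f * a ^ d 0 * b ^ d 1 := by
  rw [MvPolynomial.eval_eq']
  apply Finset.sum_congr rfl
  intro d _
  rw [Fin.prod_univ_two]
  simp [mul_assoc]

lemma cheb_cos_image_Ioo : Real.cos '' Set.Ioo 0 π = Set.Ioo (-1 : ℝ) 1 := by
  ext x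
  constructor
  · rintro ⟨θ, ⟨h0, hπ⟩, rfl⟩
    constructor
    · have := Real.strictAntiOn_cos (Set.mem_Icc.2 ⟨le_of_lt h0, le_of_lt hπ⟩)
        (Set.mem_Icc.2 ⟨le_of_lt (lt_trans h0 hπ), le_refl π⟩) hπ
      simpa [Real.cos_pi] using this
    · have := Real.strictAntiOn_cos (Set.mem_Icc.2 ⟨le_refl 0, le_of_lt (lt_trans h0 hπ)⟩)
        (Set.mem_Icc.2 ⟨le_of_lt h0, le_of_lt hπ⟩) h0
      simpa [Real.cos_zero] using this
  · rintro ⟨h1, h2⟩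
    refine ⟨Real.arccos x, ⟨Real.arccos_pos.2 h2, ?_⟩, Real.cos_arccos h1.le h2.le⟩
    rw [Real.arccos, sub_lt_iff_lt_add]
    have := Real.neg_pi_div_two_lt_arcsin.2 h1
    linarith

/-- Unconditional Chebyshev-weight change of variables. -/
lemma cheb_cov (g : ℝ → ℝ) :
    (∫ x in (-1 : ℝ)..1, g x * (Real.sqrt (1 - x ^ 2))⁻¹)
      = ∫ θ in (0 : ℝ)..π, g (Real.cos θ) := by
  have h1 : ∫ x in (-1 : ℝ)..1, g x * (Real.sqrt (1 - x ^ 2))⁻¹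
      = ∫ x in Set.Ioo (-1 : ℝ) 1, g x * (Real.sqrt (1 - x ^ 2))⁻¹ := by
    rw [intervalIntegral.integral_of_le (by norm_num), integral_Ioc_eq_integral_Ioo]
  have h2 : ∫ θ in (0 : ℝ)..π, g (Real.cos θ)
      = ∫ θ in Set.Ioo (0 : ℝ) π, g (Real.cos θ) := by
    rw [intervalIntegral.integral_of_le Real.pi_pos.le, integral_Ioc_eq_integral_Ioo]
  rw [h1, h2, ← cheb_cos_image_Ioo,
    integral_image_eq_integral_abs_deriv_smul measurableSet_Ioo
      (fun θ _ => (Real.hasDerivAt_cos θ).hasDerivWithinAt)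
      (Real.injOn_cos.mono (Set.Ioo_subset_Icc_self))]
  apply setIntegral_congr_fun measurableSet_Ioo
  intro θ hθ
  have hs : 0 < Real.sin θ := Real.sin_pos_of_pos_of_lt_pi hθ.1 hθ.2
  have hsq : Real.sqrt (1 - Real.cos θ ^ 2) = Real.sin θ := by
    rw [show (1 : ℝ) - Real.cos θ ^ 2 = Real.sin θ ^ 2 by
      have := Real.sin_sq_add_cos_sq θ; linarith]
    exact Real.sqrt_sq hs.le
  simp only [smul_eq_mul, abs_neg, abs_of_pos hs, hsq]
  field_simp

lemma cheb_integral_cos (m : ℕ) :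
    (∫ θ in (0 : ℝ)..π, Real.cos ((m : ℝ) * θ)) = if m = 0 then π else 0 := by
  rcases Nat.eq_zero_or_pos m with hm | hm
  · simp [hm]
  · have hm' : (m : ℝ) ≠ 0 := Nat.cast_ne_zero.2 hm.ne'
    rw [if_neg hm.ne', intervalIntegral.integral_comp_mul_left Real.cos hm']
    simp [Real.sin_nat_mul_pi]

lemma cheb_sum_cos (n m : ℕ) (hn : 1 ≤ n) (hm1 : 1 ≤ m) (hm2 : m ≤ 2 * n - 1) :
    ∑ l ∈ Finset.Icc 1 n, Real.cos ((m : ℝ) * (((l : ℝ) - 1 / 2) * π / n)) = 0 := by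
  have hn' : (n : ℝ) ≠ 0 := Nat.cast_ne_zero.2 (by omega)
  have hnpos : (0:ℝ) < n := by positivity
  set α : ℝ := (m : ℝ) * π / n with hα
  have key : ∀ l : ℕ, (m : ℝ) * (((l : ℝ) - 1 / 2) * π / n) = ((l : ℝ) - 1 / 2) * α := by
    intro l; rw [hα]; field_simp
  have hsin : Real.sin (α / 2) ≠ 0 := by
    apply ne_of_gt
    apply Real.sin_pos_of_pos_of_lt_pi
    · rw [hα]
      have : (0:ℝ) < (m:ℝ) := by exact_mod_cast hm1
      positivity
    · rw [hα, div_div, div_lt_iff₀ (by positivity)]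
      have hmlt : (m : ℝ) < 2 * n := by exact_mod_cast (by omega : m < 2 * n)
      nlinarith [Real.pi_pos]
  have htel : (2 * Real.sin (α / 2)) * ∑ l ∈ Finset.Icc 1 n, Real.cos (((l : ℝ) - 1 / 2) * α)
      = Real.sin ((n:ℝ) * α) - Real.sin (((0:ℕ):ℝ) * α) := by
    rw [Finset.mul_sum, show Finset.Icc 1 n = Finset.Ico 1 (n + 1) by rfl,
      Finset.sum_Ico_eq_sum_range]
    simp only [Nat.add_sub_cancel]
    rw [show Real.sin ((n:ℝ) * α) - Real.sin (((0:ℕ):ℝ) * α)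
        = (fun k : ℕ => Real.sin ((k : ℝ) * α)) n - (fun k : ℕ => Real.sin ((k : ℝ) * α)) 0 by
          norm_num,
      ← Finset.sum_range_sub (fun k : ℕ => Real.sin ((k : ℝ) * α)) n]
    apply Finset.sum_congr rfl
    intro k _
    have h := Real.sin_sub_sin (((k:ℝ) + 1) * α) ((k : ℝ) * α)
    rw [show (((k:ℝ)+1)*α - (k:ℝ)*α)/2 = α/2 by ring,
        show (((k:ℝ)+1)*α + (k:ℝ)*α)/2 = ((1:ℝ) + (k:ℝ) - 1/2) * α by ring] at h
    push_cast
    linarith [h]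
  have hzero : Real.sin ((n : ℝ) * α) = 0 := by
    rw [hα, show (n:ℝ) * ((m:ℝ) * π / n) = (m:ℝ) * π by field_simp]
    exact Real.sin_nat_mul_pi m
  have hS : (2 * Real.sin (α / 2)) * ∑ l ∈ Finset.Icc 1 n, Real.cos (((l : ℝ) - 1 / 2) * α)
      = 0 := by
    rw [htel, hzero, Nat.cast_zero, zero_mul, Real.sin_zero, sub_zero]
  have h2 : (2 : ℝ) * Real.sin (α / 2) ≠ 0 := mul_ne_zero two_ne_zero hsin
  have := (mul_eq_zero.mp hS).resolve_left h2
  simp only [key]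
  exact this

/-- Exactness of Gauss–Chebyshev quadrature on `cos^k θ · cos (i θ)` for `k + i ≤ 2n - 1`. -/
lemma cheb_trig_exact (n : ℕ) (hn : 1 ≤ n) : ∀ k i : ℕ, k + i ≤ 2 * n - 1 →
    (π / n) * ∑ l ∈ Finset.Icc 1 n,
        (Real.cos (((l : ℝ) - 1 / 2) * π / n)) ^ k *
          Real.cos ((i : ℝ) * (((l : ℝ) - 1 / 2) * π / n))
      = ∫ θ in (0 : ℝ)..π, (Real.cos θ) ^ k * Real.cos ((i : ℝ) * θ) := by
  have hn' : (n : ℝ) ≠ 0 := Nat.cast_ne_zero.2 (by omega)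
  intro k
  induction k with
  | zero =>
    intro i hi
    simp only [pow_zero, one_mul]
    rw [cheb_integral_cos i]
    rcases Nat.eq_zero_or_pos i with h0 | h0
    · subst h0
      simp only [Nat.cast_zero, zero_mul, Real.cos_zero, if_pos rfl, if_true]
      rw [Finset.sum_const, Nat.card_Icc]
      simp only [Nat.add_sub_cancel, nsmul_eq_mul, mul_one]
      field_simp
    · rw [if_neg h0.ne', cheb_sum_cos n i hn h0 (by omega), mul_zero]
  | succ k ih =>
    intro i hi
    rcases Nat.eq_zero_or_pos i with h0 | h0
    · subst h0
      have hrw : ∀ θ : ℝ, (Real.cos θ) ^ (k + 1) * Real.cos (((0:ℕ) : ℝ) * θ)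
          = (Real.cos θ) ^ k * Real.cos (((1:ℕ) : ℝ) * θ) := by
        intro θ
        simp [pow_succ]
      simp only [hrw]
      exact ih 1 (by omega)
    · obtain ⟨i', rfl⟩ : ∃ i', i = i' + 1 := ⟨i - 1, by omega⟩
      have hrw : ∀ θ : ℝ, (Real.cos θ) ^ (k + 1) * Real.cos (((i' + 1 : ℕ) : ℝ) * θ)
          = ((Real.cos θ) ^ k * Real.cos (((i' + 2 : ℕ) : ℝ) * θ)
              + (Real.cos θ) ^ k * Real.cos (((i' : ℕ) : ℝ) * θ)) / 2 := by
        intro θ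
        push_cast
        rw [show ((i':ℝ) + 2) * θ = ((i' + 1) * θ + θ) by ring,
            show (i':ℝ) * θ = ((i' + 1) * θ - θ) by ring,
            Real.cos_add, Real.cos_sub, pow_succ]
        ring
      simp only [hrw]
      have int1 : IntervalIntegrable
          (fun θ : ℝ => (Real.cos θ) ^ k * Real.cos (((i' + 2 : ℕ) : ℝ) * θ))
          MeasureTheory.volume 0 π :=
        ((by fun_prop :
          Continuous fun θ : ℝ => (Real.cos θ) ^ k * Real.cos (((i' + 2 : ℕ) : ℝ) * θ)).intervalIntegrable 0 π)
      have int2 : IntervalIntegrable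
          (fun θ : ℝ => (Real.cos θ) ^ k * Real.cos (((i' : ℕ) : ℝ) * θ))
          MeasureTheory.volume 0 π :=
        ((by fun_prop :
          Continuous fun θ : ℝ => (Real.cos θ) ^ k * Real.cos (((i' : ℕ) : ℝ) * θ)).intervalIntegrable 0 π)
      have hsplit : (∫ θ in (0 : ℝ)..π,
            ((Real.cos θ) ^ k * Real.cos (((i' + 2 : ℕ) : ℝ) * θ)
              + (Real.cos θ) ^ k * Real.cos (((i' : ℕ) : ℝ) * θ)) / 2)
          = ((∫ θ in (0 : ℝ)..π, (Real.cos θ) ^ k * Real.cos (((i' + 2 : ℕ) : ℝ) * θ))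
              + (∫ θ in (0 : ℝ)..π, (Real.cos θ) ^ k * Real.cos (((i' : ℕ) : ℝ) * θ))) / 2 := by
        rw [← intervalIntegral.integral_add int1 int2, ← intervalIntegral.integral_div]
      rw [hsplit, ← ih (i' + 2) (by omega), ← ih i' (by omega)]
      have hsum : ∀ (a b : ℕ → ℝ), (∑ l ∈ Finset.Icc 1 n, (a l + b l) / 2)
          = ((∑ l ∈ Finset.Icc 1 n, a l) + ∑ l ∈ Finset.Icc 1 n, b l) / 2 := by
        intro a b
        rw [← Finset.sum_add_distrib, Finset.sum_div]
      rw [hsum]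
      ring

/-- Exactness of the approximated bivariate Chebyshev coefficients for polynomials:
if `deg_x f + i ≤ 2n_x - 1` and `deg_y f + j ≤ 2n_y - 1`, then the tensor
Gauss–Chebyshev quadrature approximation `c_{i,j,n_x,n_y}` equals the exact
coefficient `c_{i,j}`. -/
theorem approx_bivariate_chebyshev_coeff_exact (nx ny : ℕ) (hx : 1 ≤ nx) (hy : 1 ≤ ny)
    (f : MvPolynomial (Fin 2) ℝ) (i j : ℕ)
    (hfx : f.degreeOf 0 + i ≤ 2 * nx - 1) (hfy : f.degreeOf 1 + j ≤ 2 * ny - 1) :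
    ((if i = 0 ∧ j = 0 then (1 : ℝ) else if i = 0 ∨ j = 0 then 2 else 4) / ((nx : ℝ) * ny)) *
        ∑ lx ∈ Finset.Icc 1 nx, ∑ ly ∈ Finset.Icc 1 ny,
          MvPolynomial.eval
              ![Real.cos (((lx : ℝ) - 1 / 2) * Real.pi / nx),
                Real.cos (((ly : ℝ) - 1 / 2) * Real.pi / ny)] f *
            (Polynomial.Chebyshev.T ℝ i).eval (Real.cos (((lx : ℝ) - 1 / 2) * Real.pi / nx)) *
            (Polynomial.Chebyshev.T ℝ j).eval (Real.cos (((ly : ℝ) - 1 / 2) * Real.pi / ny))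
      = ((if i = 0 ∧ j = 0 then (1 : ℝ) else if i = 0 ∨ j = 0 then 2 else 4) / Real.pi ^ 2) *
        ∫ x in (-1 : ℝ)..1, ∫ y in (-1 : ℝ)..1,
          MvPolynomial.eval ![x, y] f *
            (Polynomial.Chebyshev.T ℝ i).eval x * (Polynomial.Chebyshev.T ℝ j).eval y *
            ((Real.sqrt (1 - x ^ 2))⁻¹ * (Real.sqrt (1 - y ^ 2))⁻¹) := by
  have hπ := Real.pi_pos
  have hπ' : (π : ℝ) ≠ 0 := hπ.ne'
  have hnx' : (nx : ℝ) ≠ 0 := Nat.cast_ne_zero.2 (by omega)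
  have hny' : (ny : ℝ) ≠ 0 := Nat.cast_ne_zero.2 (by omega)
  set ε : ℝ := if i = 0 ∧ j = 0 then (1 : ℝ) else if i = 0 ∨ j = 0 then 2 else 4 with hε
  set Bk : ℕ → ℝ := fun k => ∫ θ in (0 : ℝ)..π, (Real.cos θ) ^ k * Real.cos ((i : ℝ) * θ)
    with hBk
  set Ak : ℕ → ℝ := fun k => ∫ θ in (0 : ℝ)..π, (Real.cos θ) ^ k * Real.cos ((j : ℝ) * θ)
    with hAk
  -- degree bounds for monomials
  have hdx : ∀ d ∈ f.support, d 0 + i ≤ 2 * nx - 1 := by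
    intro d hd
    have : d 0 ≤ f.degreeOf 0 := by
      rw [MvPolynomial.degreeOf_eq_sup]
      exact Finset.le_sup (f := fun m : Fin 2 →₀ ℕ => m 0) hd
    omega
  have hdy : ∀ d ∈ f.support, d 1 + j ≤ 2 * ny - 1 := by
    intro d hd
    have : d 1 ≤ f.degreeOf 1 := by
      rw [MvPolynomial.degreeOf_eq_sup]
      exact Finset.le_sup (f := fun m : Fin 2 →₀ ℕ => m 1) hd
    omega
  -- The discrete double sum
  have hS : (∑ lx ∈ Finset.Icc 1 nx, ∑ ly ∈ Finset.Icc 1 ny,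
        MvPolynomial.eval
            ![Real.cos (((lx : ℝ) - 1 / 2) * Real.pi / nx),
              Real.cos (((ly : ℝ) - 1 / 2) * Real.pi / ny)] f *
          (Polynomial.Chebyshev.T ℝ i).eval (Real.cos (((lx : ℝ) - 1 / 2) * Real.pi / nx)) *
          (Polynomial.Chebyshev.T ℝ j).eval (Real.cos (((ly : ℝ) - 1 / 2) * Real.pi / ny)))
      = ∑ d ∈ f.support, MvPolynomial.coeff d f *
          ((nx : ℝ) / π * Bk (d 0)) * ((ny : ℝ) / π * Ak (d 1)) := by
    have step1 : ∀ lx ∈ Finset.Icc 1 nx, ∀ ly ∈ Finset.Icc 1 ny,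
        MvPolynomial.eval
            ![Real.cos (((lx : ℝ) - 1 / 2) * Real.pi / nx),
              Real.cos (((ly : ℝ) - 1 / 2) * Real.pi / ny)] f *
          (Polynomial.Chebyshev.T ℝ i).eval (Real.cos (((lx : ℝ) - 1 / 2) * Real.pi / nx)) *
          (Polynomial.Chebyshev.T ℝ j).eval (Real.cos (((ly : ℝ) - 1 / 2) * Real.pi / ny))
        = ∑ d ∈ f.support, MvPolynomial.coeff d f *
            ((Real.cos (((lx : ℝ) - 1 / 2) * Real.pi / nx)) ^ d 0 *
              Real.cos ((i : ℝ) * (((lx : ℝ) - 1 / 2) * Real.pi / nx))) *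
            ((Real.cos (((ly : ℝ) - 1 / 2) * Real.pi / ny)) ^ d 1 *
              Real.cos ((j : ℝ) * (((ly : ℝ) - 1 / 2) * Real.pi / ny))) := by
      intro lx _ ly _
      rw [cheb_eval_pair, Polynomial.Chebyshev.T_real_cos, Polynomial.Chebyshev.T_real_cos,
        Finset.sum_mul, Finset.sum_mul]
      apply Finset.sum_congr rfl
      intro d _
      push_cast
      ring
    rw [Finset.sum_congr rfl (fun lx hlx => Finset.sum_congr rfl (fun ly hly => step1 lx hlx ly hly))]
    rw [Finset.sum_congr rfl (fun lx _ => Finset.sum_comm), Finset.sum_comm]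
    apply Finset.sum_congr rfl
    intro d hd
    have hfac : ∑ lx ∈ Finset.Icc 1 nx, ∑ ly ∈ Finset.Icc 1 ny,
        MvPolynomial.coeff d f *
          ((Real.cos (((lx : ℝ) - 1 / 2) * Real.pi / nx)) ^ d 0 *
            Real.cos ((i : ℝ) * (((lx : ℝ) - 1 / 2) * Real.pi / nx))) *
          ((Real.cos (((ly : ℝ) - 1 / 2) * Real.pi / ny)) ^ d 1 *
            Real.cos ((j : ℝ) * (((ly : ℝ) - 1 / 2) * Real.pi / ny)))
        = MvPolynomial.coeff d f *
            (∑ lx ∈ Finset.Icc 1 nx, (Real.cos (((lx : ℝ) - 1 / 2) * Real.pi / nx)) ^ d 0 *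
              Real.cos ((i : ℝ) * (((lx : ℝ) - 1 / 2) * Real.pi / nx))) *
            (∑ ly ∈ Finset.Icc 1 ny, (Real.cos (((ly : ℝ) - 1 / 2) * Real.pi / ny)) ^ d 1 *
              Real.cos ((j : ℝ) * (((ly : ℝ) - 1 / 2) * Real.pi / ny))) := by
      simp only [Finset.mul_sum, Finset.sum_mul]
      rw [Finset.sum_comm]
    rw [hfac]
    have h1 : (∑ lx ∈ Finset.Icc 1 nx, (Real.cos (((lx : ℝ) - 1 / 2) * Real.pi / nx)) ^ d 0 *
        Real.cos ((i : ℝ) * (((lx : ℝ) - 1 / 2) * Real.pi / nx))) = (nx : ℝ) / π * Bk (d 0) := by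
      have := cheb_trig_exact nx hx (d 0) i (hdx d hd)
      have e : (nx : ℝ) / π * (π / nx) = 1 := by field_simp
      rw [hBk]
      dsimp only
      rw [← this, ← mul_assoc, e, one_mul]
    have h2 : (∑ ly ∈ Finset.Icc 1 ny, (Real.cos (((ly : ℝ) - 1 / 2) * Real.pi / ny)) ^ d 1 *
        Real.cos ((j : ℝ) * (((ly : ℝ) - 1 / 2) * Real.pi / ny))) = (ny : ℝ) / π * Ak (d 1) := by
      have := cheb_trig_exact ny hy (d 1) j (hdy d hd)
      have e : (ny : ℝ) / π * (π / ny) = 1 := by field_simp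
      rw [hAk]
      dsimp only
      rw [← this, ← mul_assoc, e, one_mul]
    rw [h1, h2]
  -- The double integral
  have hI : (∫ x in (-1 : ℝ)..1, ∫ y in (-1 : ℝ)..1,
        MvPolynomial.eval ![x, y] f *
          (Polynomial.Chebyshev.T ℝ i).eval x * (Polynomial.Chebyshev.T ℝ j).eval y *
          ((Real.sqrt (1 - x ^ 2))⁻¹ * (Real.sqrt (1 - y ^ 2))⁻¹))
      = ∑ d ∈ f.support, MvPolynomial.coeff d f * Bk (d 0) * Ak (d 1) := by
    have inner : ∀ x : ℝ, (∫ y in (-1 : ℝ)..1,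
          MvPolynomial.eval ![x, y] f *
            (Polynomial.Chebyshev.T ℝ i).eval x * (Polynomial.Chebyshev.T ℝ j).eval y *
            ((Real.sqrt (1 - x ^ 2))⁻¹ * (Real.sqrt (1 - y ^ 2))⁻¹))
        = ((Polynomial.Chebyshev.T ℝ i).eval x * (Real.sqrt (1 - x ^ 2))⁻¹ *
            ∫ φ in (0 : ℝ)..π, MvPolynomial.eval ![x, Real.cos φ] f * Real.cos ((j : ℝ) * φ)) := by
      intro x
      have e1 : (∫ y in (-1 : ℝ)..1,
            MvPolynomial.eval ![x, y] f *
              (Polynomial.Chebyshev.T ℝ i).eval x * (Polynomial.Chebyshev.T ℝ j).eval y *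
              ((Real.sqrt (1 - x ^ 2))⁻¹ * (Real.sqrt (1 - y ^ 2))⁻¹))
          = ∫ y in (-1 : ℝ)..1,
              (MvPolynomial.eval ![x, y] f *
                (Polynomial.Chebyshev.T ℝ i).eval x * (Real.sqrt (1 - x ^ 2))⁻¹ *
                (Polynomial.Chebyshev.T ℝ j).eval y) * (Real.sqrt (1 - y ^ 2))⁻¹ := by
        apply intervalIntegral.integral_congr
        intro y _
        ring
      rw [e1, cheb_cov]
      have e2 : (∫ φ in (0 : ℝ)..π,
            MvPolynomial.eval ![x, Real.cos φ] f *
              (Polynomial.Chebyshev.T ℝ i).eval x * (Real.sqrt (1 - x ^ 2))⁻¹ *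
              (Polynomial.Chebyshev.T ℝ j).eval (Real.cos φ))
          = ∫ φ in (0 : ℝ)..π,
              ((Polynomial.Chebyshev.T ℝ i).eval x * (Real.sqrt (1 - x ^ 2))⁻¹) *
                (MvPolynomial.eval ![x, Real.cos φ] f * Real.cos ((j : ℝ) * φ)) := by
        apply intervalIntegral.integral_congr
        intro φ _
        simp only [Polynomial.Chebyshev.T_real_cos, Int.cast_natCast]
        ring
      rw [e2, intervalIntegral.integral_const_mul]
    rw [intervalIntegral.integral_congr (fun x _ => inner x)]
    have e3 : (∫ x in (-1 : ℝ)..1,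
          (Polynomial.Chebyshev.T ℝ i).eval x * (Real.sqrt (1 - x ^ 2))⁻¹ *
            ∫ φ in (0 : ℝ)..π, MvPolynomial.eval ![x, Real.cos φ] f * Real.cos ((j : ℝ) * φ))
        = ∫ x in (-1 : ℝ)..1,
            ((Polynomial.Chebyshev.T ℝ i).eval x *
              ∫ φ in (0 : ℝ)..π, MvPolynomial.eval ![x, Real.cos φ] f * Real.cos ((j : ℝ) * φ)) *
              (Real.sqrt (1 - x ^ 2))⁻¹ := by
      apply intervalIntegral.integral_congr
      intro x _
      ring
    rw [e3, cheb_cov]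
    have hφ : ∀ θ : ℝ, (∫ φ in (0 : ℝ)..π,
          MvPolynomial.eval ![Real.cos θ, Real.cos φ] f * Real.cos ((j : ℝ) * φ))
        = ∑ d ∈ f.support, MvPolynomial.coeff d f * (Real.cos θ) ^ d 0 * Ak (d 1) := by
      intro θ
      have e4 : (∫ φ in (0 : ℝ)..π,
            MvPolynomial.eval ![Real.cos θ, Real.cos φ] f * Real.cos ((j : ℝ) * φ))
          = ∫ φ in (0 : ℝ)..π, ∑ d ∈ f.support,
              (MvPolynomial.coeff d f * (Real.cos θ) ^ d 0) *
                ((Real.cos φ) ^ d 1 * Real.cos ((j : ℝ) * φ)) := by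
        apply intervalIntegral.integral_congr
        intro φ _
        simp only [cheb_eval_pair, Finset.sum_mul]
        apply Finset.sum_congr rfl
        intro d _
        ring
      rw [e4, intervalIntegral.integral_finset_sum]
      · apply Finset.sum_congr rfl
        intro d _
        rw [intervalIntegral.integral_const_mul, hAk, mul_assoc]
      · intro d _
        exact ((by fun_prop : Continuous fun φ : ℝ =>
          (MvPolynomial.coeff d f * (Real.cos θ) ^ d 0) *
            ((Real.cos φ) ^ d 1 * Real.cos ((j : ℝ) * φ))).intervalIntegrable 0 π)
    have e5 : (∫ θ in (0 : ℝ)..π,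
          (Polynomial.Chebyshev.T ℝ i).eval (Real.cos θ) *
            ∫ φ in (0 : ℝ)..π, MvPolynomial.eval ![Real.cos θ, Real.cos φ] f *
              Real.cos ((j : ℝ) * φ))
        = ∫ θ in (0 : ℝ)..π, ∑ d ∈ f.support,
            (MvPolynomial.coeff d f * Ak (d 1)) *
              ((Real.cos θ) ^ d 0 * Real.cos ((i : ℝ) * θ)) := by
      apply intervalIntegral.integral_congr
      intro θ _
      simp only [hφ, Polynomial.Chebyshev.T_real_cos, Int.cast_natCast, Finset.mul_sum]
      apply Finset.sum_congr rfl
      intro d _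
      ring
    rw [e5, intervalIntegral.integral_finset_sum]
    · apply Finset.sum_congr rfl
      intro d _
      rw [intervalIntegral.integral_const_mul, hBk]
      ring
    · intro d _
      exact ((by fun_prop : Continuous fun θ : ℝ =>
        (MvPolynomial.coeff d f * Ak (d 1)) *
          ((Real.cos θ) ^ d 0 * Real.cos ((i : ℝ) * θ))).intervalIntegrable 0 π)
  rw [hS, hI, Finset.mul_sum, Finset.mul_sum]
  apply Finset.sum_congr rfl
  intro d _
  field_simp
end

section
/- Bivariate product coefficient formula at high indices: let N_x, N_y, n_{q_1}, n_{q_2} be natural numbers, let a_{i,j} (0 ≤ i ≤ N_x, 0 ≤ j ≤ N_y) and q_{r,s} (0 ≤ r ≤ n_{q_1}, 0 ≤ s ≤ n_{q_2}) be real numbers, and set f(x, y) = ∑_{i=0}^{N_x} ∑_{j=0}^{N_y} a_{i,j} T_i(x) T_j(y) and Q(x, y) = ∑_{r=0}^{n_{q_1}} ∑_{s=0}^{n_{q_2}} q_{r,s} T_r(x) T_s(y). Then for all integers i ≥ n_{q_1} + 1 and j ≥ n_{q_2} + 1, the coefficient of T_i(x) T_j(y) in the expansion of the product f·Q in the tensor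 Chebyshev basis equals (1/4) ∑_{r=0}^{n_{q_1}} ∑_{s=0}^{n_{q_2}} (a_{i−r, j−s} + a_{i−r, j+s} + a_{i+r, j−s} + a_{i+r, j+s}) q_{r,s}, where a_{m,n} is interpreted as 0 whenever m > N_x or n > N_y. -/
open Polynomial Chebyshev

section ChebAux

variable {S : Type*} [CommRing S]

variable {S : Type*} [CommRing S]

theorem T_natDegree_le : ∀ n : ℕ, (T S (n : ℤ)).natDegree ≤ n := by
  intro n
  induction n using Nat.strong_induction_on with
  | _ n ih =>
    match n with
    | 0 => simp [T_zero]
    | 1 => simp [T_one, natDegree_X_le]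
    | (n+2) =>
      have h : ((n:ℤ)+2) = ((n+1 : ℕ) : ℤ) + 1 := by push_cast; ring
      rw [show ((n+2:ℕ):ℤ) = (n:ℤ)+2 by push_cast; ring, T_add_two]
      refine le_trans (natDegree_sub_le _ _) ?_
      have h1 : (2 * X * T S ((n:ℤ)+1)).natDegree ≤ n + 2 := by
        refine le_trans (natDegree_mul_le) ?_
        have : (2 * X : S[X]).natDegree ≤ 1 := by
          refine le_trans (natDegree_mul_le) ?_
          simp [natDegree_X_le]
        have h2 := ih (n+1) (by omega)
        rw [show ((n+1:ℕ):ℤ) = (n:ℤ)+1 by push_cast; ring] at h2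
        omega
      have h2 := ih n (by omega)
      omega

theorem T_coeff_self : ∀ n : ℕ, (T S (n : ℤ)).coeff n = if n = 0 then 1 else 2^(n-1) := by
  intro n
  induction n using Nat.strong_induction_on with
  | _ n ih =>
    match n with
    | 0 => simp [T_zero]
    | 1 => simp [T_one]
    | (n+2) =>
      rw [show ((n+2:ℕ):ℤ) = (n:ℤ)+2 by push_cast; ring, T_add_two]
      have hz : (T S (n:ℤ)).coeff (n+2) = 0 :=
        coeff_eq_zero_of_natDegree_lt (lt_of_le_of_lt (T_natDegree_le n) (by omega))
      have h1 := ih (n+1) (by omega)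
      rw [show ((n+1:ℕ):ℤ) = (n:ℤ)+1 by push_cast; ring] at h1
      simp only [coeff_sub, hz, sub_zero]
      rw [show (2 * X * T S ((n:ℤ)+1)) = 2 * (X * T S ((n:ℤ)+1)) by ring]
      rw [show (2 : S[X]) = C 2 by rw [map_ofNat], coeff_C_mul, coeff_X_mul, h1]
      simp [pow_succ, mul_comm]

variable {S : Type*} [CommRing S]

theorem linIndepT [IsDomain S] [CharZero S] :
    ∀ (M : ℕ) (g : ℕ → S),
    (∑ i ∈ Finset.range M, C (g i) * T S (i : ℤ)) = 0 → ∀ i < M, g i = 0 := by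
  intro M
  induction M with
  | zero => intro g h i hi; omega
  | succ M ih =>
    intro g h i hi
    have hM : g M = 0 := by
      have hc := congrArg (fun p => p.coeff M) h
      simp only [finset_sum_coeff, coeff_zero] at hc
      rw [Finset.sum_range_succ] at hc
      have hz : ∀ k ∈ Finset.range M, (C (g k) * T S (k : ℤ)).coeff M = 0 := by
        intro k hk
        rw [coeff_C_mul]
        rw [coeff_eq_zero_of_natDegree_lt (lt_of_le_of_lt (T_natDegree_le k)
          (Finset.mem_range.mp hk)), mul_zero]
      rw [Finset.sum_eq_zero hz, zero_add, coeff_C_mul, T_coeff_self] at hc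
      rcases eq_or_ne M 0 with h0 | h0
      · simpa [h0] using hc
      · rw [if_neg h0] at hc
        have : (2 : S) ^ (M - 1) ≠ 0 := pow_ne_zero _ two_ne_zero
        exact (mul_eq_zero.mp hc).resolve_right this
    rcases eq_or_ne i M with rfl | hne
    · exact hM
    · refine ih g ?_ i (by omega)
      rw [Finset.sum_range_succ, hM] at h
      simpa using h

theorem aevalX_T {S : Type*} [CommRing S] [Algebra ℝ S] (n : ℕ) :
    aeval (Polynomial.X : S[X]) (T ℝ (n : ℤ)) = T S (n : ℤ) := by
  have h := aeval_algHom_apply (mapAlgHom (Algebra.ofId ℝ S)) (Polynomial.X : ℝ[X]) (T ℝ (n:ℤ))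
  rw [aeval_X_left_apply] at h
  have hX : (mapAlgHom (Algebra.ofId ℝ S)) (Polynomial.X : ℝ[X]) = Polynomial.X := by
    simp [mapAlgHom]
  rw [hX] at h
  rw [h]
  show Polynomial.map _ _ = _
  have : ((Algebra.ofId ℝ S) : ℝ →+* S) = algebraMap ℝ S := rfl
  rw [show ((Algebra.ofId ℝ S).toRingHom) = algebraMap ℝ S from rfl]
  exact map_T _ _

theorem linIndepT2 (M N : ℕ) (d : ℕ → ℕ → ℝ)
    (h : ∑ i ∈ Finset.range M, ∑ j ∈ Finset.range N,
        MvPolynomial.C (d i j) *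
          Polynomial.aeval (MvPolynomial.X (0 : Fin 2)) (Polynomial.Chebyshev.T ℝ i) *
          Polynomial.aeval (MvPolynomial.X (1 : Fin 2)) (Polynomial.Chebyshev.T ℝ j) = 0) :
    ∀ i < M, ∀ j < N, d i j = 0 := by
  set S := MvPolynomial (Fin 1) ℝ
  set φ := MvPolynomial.finSuccEquiv ℝ 1 with hφ
  apply_fun (fun p : MvPolynomial (Fin 2) ℝ => φ p) at h
  have h2 := h
  simp only [map_sum, map_mul, map_zero] at h2
  have hC : ∀ r : ℝ, φ (MvPolynomial.C r) = Polynomial.C (MvPolynomial.C r) := by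
    intro r
    rw [← MvPolynomial.algebraMap_eq, AlgEquiv.commutes]
    rfl
  have hX0 : ∀ k : ℕ, φ (Polynomial.aeval (MvPolynomial.X 0) (T ℝ (k:ℤ)))
      = T S (k : ℤ) := by
    intro k
    rw [← aeval_algHom_apply, MvPolynomial.finSuccEquiv_X_zero, aevalX_T]
  have hX1 : ∀ k : ℕ, φ (Polynomial.aeval (MvPolynomial.X 1) (T ℝ (k:ℤ)))
      = Polynomial.C (Polynomial.aeval (MvPolynomial.X 0) (T ℝ (k:ℤ))) := by
    intro k
    rw [← aeval_algHom_apply, show (1 : Fin 2) = Fin.succ 0 from rfl,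
      MvPolynomial.finSuccEquiv_X_succ]
    exact aeval_algHom_apply (CAlgHom (R := ℝ) (A := S)) (MvPolynomial.X 0) (T ℝ (k:ℤ))
  simp only [hC, hX0, hX1] at h2
  have h3 : ∑ i ∈ Finset.range M,
      C (∑ j ∈ Finset.range N, MvPolynomial.C (d i j) *
        Polynomial.aeval (MvPolynomial.X 0) (T ℝ (j:ℤ))) * T S (i : ℤ) = 0 := by
    rw [← h2]
    refine Finset.sum_congr rfl fun i _ => ?_
    rw [map_sum, Finset.sum_mul]
    refine Finset.sum_congr rfl fun j _ => ?_
    rw [map_mul]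
    ring
  intro i hi j hj
  have h4 := linIndepT M _ h3 i hi
  -- now reduce over Fin 1
  set ψ0 := MvPolynomial.finSuccEquiv ℝ 0 with hψ0
  apply_fun (fun p : MvPolynomial (Fin 1) ℝ => ψ0 p) at h4
  have h5 := h4
  simp only [map_sum, map_mul, map_zero] at h5
  have hC' : ∀ r : ℝ, ψ0 (MvPolynomial.C r) = Polynomial.C (MvPolynomial.C r) := by
    intro r
    rw [← MvPolynomial.algebraMap_eq, AlgEquiv.commutes]
    rfl
  have hX0' : ∀ k : ℕ, ψ0 (Polynomial.aeval (MvPolynomial.X 0) (T ℝ (k:ℤ)))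
      = T (MvPolynomial (Fin 0) ℝ) (k : ℤ) := by
    intro k
    rw [← aeval_algHom_apply, MvPolynomial.finSuccEquiv_X_zero, aevalX_T]
  simp only [hC', hX0'] at h5
  have h6 := linIndepT N _ h5 j hj
  exact MvPolynomial.C_injective (Fin 0) ℝ (h6.trans (map_zero MvPolynomial.C).symm)

end ChebAux

section ChebAux2

variable {A : Type*} [CommRing A] [Algebra ℝ A]


theorem umul (x : A) (p r : ℤ) :
    aeval x (T ℝ p) * aeval x (T ℝ r)
      = algebraMap ℝ A 2⁻¹ * (aeval x (T ℝ (p+r)) + aeval x (T ℝ (p-r))) := by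
  have h := congrArg (aeval (R := ℝ) x) (T_mul_T ℝ p r)
  simp only [map_mul, map_add, map_ofNat] at h
  have h2 : (2 : A) = algebraMap ℝ A 2 := by
    rw [map_ofNat]
  rw [h2, mul_assoc] at h
  have h3 : (algebraMap ℝ A 2⁻¹) * algebraMap ℝ A 2 = 1 := by
    rw [← map_mul]; norm_num
  calc aeval x (T ℝ p) * aeval x (T ℝ r)
      = (algebraMap ℝ A 2⁻¹ * algebraMap ℝ A 2) * (aeval x (T ℝ p) * aeval x (T ℝ r)) := by
        rw [h3, one_mul]
    _ = _ := by rw [mul_assoc, h]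

theorem sumE1 (x : A) (N r L : ℕ) (hL : N + r < L) (w : ℕ → A) :
    ∑ p ∈ Finset.range (N+1), w p * aeval x (T ℝ ((p + r : ℕ) : ℤ))
      = ∑ m ∈ Finset.range L,
        (if r ≤ m ∧ m - r ≤ N then w (m - r) else 0) * aeval x (T ℝ (m : ℤ)) := by
  have : ∀ m : ℕ, (if r ≤ m ∧ m - r ≤ N then w (m - r) else 0) * aeval x (T ℝ (m : ℤ))
      = if r ≤ m ∧ m - r ≤ N then w (m - r) * aeval x (T ℝ (m : ℤ)) else 0 := by
    intro m; rw [ite_mul, zero_mul]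
  simp only [this]
  rw [← Finset.sum_filter]
  refine Finset.sum_bij' (fun p _ => p + r) (fun m _ => m - r) ?_ ?_ ?_ ?_ ?_
  · intro p hp
    simp only [Finset.mem_range] at hp
    simp only [Finset.mem_filter, Finset.mem_range]
    omega
  · intro m hm
    simp only [Finset.mem_filter, Finset.mem_range] at hm
    simp only [Finset.mem_range]
    omega
  · intro p hp; simp
  · intro m hm
    simp only [Finset.mem_filter, Finset.mem_range] at hm
    show m - r + r = m
    omega
  · intro p hp
    simp only [Finset.mem_range] at hp
    rw [show p + r - r = p by omega]

theorem sumE2 (x : A) (N r L : ℕ) (hL : N + r < L) (w : ℕ → A) :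
    ∑ p ∈ Finset.range (N+1), w p * aeval x (T ℝ ((p : ℤ) - (r : ℤ)))
      = ∑ m ∈ Finset.range L,
        ((if m + r ≤ N then w (m + r) else 0) +
         (if 1 ≤ m ∧ m ≤ r ∧ r - m ≤ N then w (r - m) else 0)) * aeval x (T ℝ (m : ℤ)) := by
  simp only [add_mul]
  rw [Finset.sum_add_distrib]
  have hsplit : Finset.range (N+1)
      = (Finset.range (N+1)).filter (fun p => r ≤ p)
        ∪ (Finset.range (N+1)).filter (fun p => ¬ r ≤ p) := by
    rw [Finset.filter_union_filter_not_eq]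
  rw [hsplit, Finset.sum_union (Finset.disjoint_filter_filter_not _ _ _)]
  congr 1
  · -- p ≥ r part ↦ first sum
    have : ∀ m : ℕ, (if m + r ≤ N then w (m + r) else 0) * aeval x (T ℝ (m : ℤ))
        = if m + r ≤ N then w (m + r) * aeval x (T ℝ (m : ℤ)) else 0 := by
      intro m; rw [ite_mul, zero_mul]
    simp only [this]
    rw [← Finset.sum_filter]
    refine Finset.sum_bij' (fun p _ => p - r) (fun m _ => m + r) ?_ ?_ ?_ ?_ ?_
    · intro p hp
      simp only [Finset.mem_filter, Finset.mem_range] at hp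
      simp only [Finset.mem_filter, Finset.mem_range]
      omega
    · intro m hm
      simp only [Finset.mem_filter, Finset.mem_range] at hm
      simp only [Finset.mem_filter, Finset.mem_range]
      omega
    · intro p hp
      simp only [Finset.mem_filter, Finset.mem_range] at hp
      show p - r + r = p
      omega
    · intro m hm; simp
    · intro p hp
      simp only [Finset.mem_filter, Finset.mem_range] at hp
      rw [show p - r + r = p by omega,
        show ((p - r : ℕ) : ℤ) = (p : ℤ) - (r : ℤ) by omega]
  · -- p < r part ↦ second sum
    have : ∀ m : ℕ, (if 1 ≤ m ∧ m ≤ r ∧ r - m ≤ N then w (r - m) else 0) * aeval x (T ℝ (m : ℤ))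
        = if 1 ≤ m ∧ m ≤ r ∧ r - m ≤ N then w (r - m) * aeval x (T ℝ (m : ℤ)) else 0 := by
      intro m; rw [ite_mul, zero_mul]
    simp only [this]
    rw [← Finset.sum_filter]
    refine Finset.sum_bij' (fun p _ => r - p) (fun m _ => r - m) ?_ ?_ ?_ ?_ ?_
    · intro p hp
      simp only [Finset.mem_filter, Finset.mem_range] at hp
      simp only [Finset.mem_filter, Finset.mem_range]
      omega
    · intro m hm
      simp only [Finset.mem_filter, Finset.mem_range] at hm
      simp only [Finset.mem_filter, Finset.mem_range]
      omega
    · intro p hp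
      simp only [Finset.mem_filter, Finset.mem_range] at hp
      show r - (r - p) = p
      omega
    · intro m hm
      simp only [Finset.mem_filter, Finset.mem_range] at hm
      show r - (r - m) = m
      omega
    · intro p hp
      simp only [Finset.mem_filter, Finset.mem_range] at hp
      rw [show r - (r - p) = p by omega,
        show ((p:ℤ) - (r:ℤ)) = -(((r - p : ℕ) : ℤ)) by omega, T_neg]


/-- folded convolution coefficient -/
def ayc (N : ℕ) (g : ℕ → ℝ) (r m : ℕ) : ℝ :=
  (if r ≤ m ∧ m - r ≤ N then g (m - r) else 0) + (if m + r ≤ N then g (m + r) else 0) +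
  (if 1 ≤ m ∧ m ≤ r ∧ r - m ≤ N then g (r - m) else 0)

theorem sumE (x : A) (N r L : ℕ) (hL : N + r < L) (w : ℕ → A) :
    (∑ p ∈ Finset.range (N+1), w p * aeval x (T ℝ (p:ℤ))) * aeval x (T ℝ (r:ℤ))
      = algebraMap ℝ A 2⁻¹ * ∑ m ∈ Finset.range L,
        ((if r ≤ m ∧ m - r ≤ N then w (m - r) else 0) +
         (if m + r ≤ N then w (m + r) else 0) +
         (if 1 ≤ m ∧ m ≤ r ∧ r - m ≤ N then w (r - m) else 0)) * aeval x (T ℝ (m:ℤ)) := by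
  rw [Finset.sum_mul]
  have step : ∀ p : ℕ, (w p * aeval x (T ℝ (p:ℤ))) * aeval x (T ℝ (r:ℤ))
      = w p * aeval x (T ℝ ((p+r:ℕ):ℤ)) * algebraMap ℝ A 2⁻¹
        + w p * aeval x (T ℝ ((p:ℤ)-(r:ℤ))) * algebraMap ℝ A 2⁻¹ := by
    intro p
    rw [mul_assoc, umul x p r]
    push_cast
    ring
  simp only [step]
  rw [Finset.sum_add_distrib, ← Finset.sum_mul, ← Finset.sum_mul,
    sumE1 x N r L hL w, sumE2 x N r L hL w]
  rw [Finset.sum_mul, Finset.sum_mul, Finset.mul_sum, ← Finset.sum_add_distrib]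
  refine Finset.sum_congr rfl fun m _ => ?_
  ring

theorem sumE' (x : A) (N r L : ℕ) (hL : N + r < L) (g : ℕ → ℝ) :
    (∑ p ∈ Finset.range (N+1), algebraMap ℝ A (g p) * aeval x (T ℝ (p:ℤ)))
        * aeval x (T ℝ (r:ℤ))
      = algebraMap ℝ A 2⁻¹ * ∑ m ∈ Finset.range L,
          algebraMap ℝ A (ayc N g r m) * aeval x (T ℝ (m:ℤ)) := by
  rw [sumE x N r L hL (fun p => algebraMap ℝ A (g p))]
  congr 1
  refine Finset.sum_congr rfl fun m _ => ?_
  congr 1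
  simp only [ayc, apply_ite (algebraMap ℝ A), map_zero, map_add]

theorem prodExpand (Nx Ny nq1 nq2 : ℕ) (a : ℕ → ℕ → ℝ) (r s : ℕ) (hr : r ≤ nq1) (hs : s ≤ nq2) :
    (∑ p ∈ Finset.range (Nx+1), ∑ t ∈ Finset.range (Ny+1),
        MvPolynomial.C (a p t) *
          aeval (MvPolynomial.X (0 : Fin 2)) (T ℝ (p:ℤ)) *
          aeval (MvPolynomial.X (1 : Fin 2)) (T ℝ (t:ℤ)))
      * aeval (MvPolynomial.X (0 : Fin 2)) (T ℝ (r:ℤ))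
      * aeval (MvPolynomial.X (1 : Fin 2)) (T ℝ (s:ℤ))
    = ∑ m ∈ Finset.range (Nx + nq1 + 1), ∑ n ∈ Finset.range (Ny + nq2 + 1),
        MvPolynomial.C (4⁻¹ * ayc Nx (fun p => ayc Ny (a p) s n) r m) *
          aeval (MvPolynomial.X (0 : Fin 2)) (T ℝ (m:ℤ)) *
          aeval (MvPolynomial.X (1 : Fin 2)) (T ℝ (n:ℤ)) := by
  set B := MvPolynomial (Fin 2) ℝ
  set alg := algebraMap ℝ B with halg
  have hC : (MvPolynomial.C : ℝ →+* B) = alg := (MvPolynomial.algebraMap_eq ℝ (Fin 2)).symm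
  set u : ℕ → B := fun k => aeval (MvPolynomial.X (0 : Fin 2)) (T ℝ (k:ℤ)) with hu
  set v : ℕ → B := fun k => aeval (MvPolynomial.X (1 : Fin 2)) (T ℝ (k:ℤ)) with hv
  simp only [hC]
  set S : ℕ → B := fun p => ∑ n ∈ Finset.range (Ny + nq2 + 1), alg (ayc Ny (a p) s n) * v n
    with hS
  have hyconv : ∀ p : ℕ, (∑ t ∈ Finset.range (Ny+1), alg (a p t) * v t) * v s
      = alg 2⁻¹ * S p := fun p =>
    sumE' (MvPolynomial.X (1 : Fin 2)) Ny s (Ny + nq2 + 1) (by omega) (a p)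
  have step1 : (∑ p ∈ Finset.range (Nx+1), ∑ t ∈ Finset.range (Ny+1),
        alg (a p t) * u p * v t) * u r * v s
      = (∑ p ∈ Finset.range (Nx+1), (alg 2⁻¹ * S p) * u p) * u r := by
    rw [Finset.sum_mul, Finset.sum_mul, Finset.sum_mul]
    refine Finset.sum_congr rfl fun p _ => ?_
    rw [← hyconv p]
    rw [Finset.sum_mul, Finset.sum_mul, Finset.sum_mul, Finset.sum_mul, Finset.sum_mul]
    exact Finset.sum_congr rfl fun t _ => by ring
  rw [step1, sumE (MvPolynomial.X (0 : Fin 2)) Nx r (Nx + nq1 + 1) (by omega)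
    (fun p => alg 2⁻¹ * S p)]
  have key : ∀ (c : Prop) (inst : Decidable c) (k : ℕ),
      (if c then alg 2⁻¹ * S k else 0)
        = alg 2⁻¹ * ∑ n ∈ Finset.range (Ny + nq2 + 1),
            alg (if c then ayc Ny (a k) s n else 0) * v n := by
    intro c inst k
    split_ifs with h
    · rfl
    · simp
  rw [Finset.mul_sum (Finset.range (Nx + nq1 + 1)) _ (alg 2⁻¹)]
  refine Finset.sum_congr rfl fun m _ => ?_
  rw [key _ _ (m - r), key _ _ (m + r), key _ _ (r - m)]
  rw [← mul_add, ← mul_add, ← Finset.sum_add_distrib, ← Finset.sum_add_distrib]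
  have merge : ∀ n : ℕ,
      (alg (if r ≤ m ∧ m - r ≤ Nx then ayc Ny (a (m-r)) s n else 0) * v n +
        alg (if m + r ≤ Nx then ayc Ny (a (m+r)) s n else 0) * v n) +
        alg (if 1 ≤ m ∧ m ≤ r ∧ r - m ≤ Nx then ayc Ny (a (r-m)) s n else 0) * v n
      = alg (ayc Nx (fun p => ayc Ny (a p) s n) r m) * v n := by
    intro n
    rw [← add_mul, ← add_mul, ← map_add, ← map_add]
    rfl
  simp only [merge]
  simp only [Finset.mul_sum, Finset.sum_mul]
  refine Finset.sum_congr rfl fun n _ => ?_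
  rw [show (4⁻¹ : ℝ) = 2⁻¹ * 2⁻¹ by norm_num, mul_assoc, map_mul, map_mul]
  ring

end ChebAux2

theorem sum4_swap {β : Type*} [AddCommMonoid β] (R S M N : Finset ℕ) (F : ℕ → ℕ → ℕ → ℕ → β) :
    ∑ r ∈ R, ∑ s ∈ S, ∑ m ∈ M, ∑ n ∈ N, F r s m n
      = ∑ m ∈ M, ∑ n ∈ N, ∑ r ∈ R, ∑ s ∈ S, F r s m n :=
  calc ∑ r ∈ R, ∑ s ∈ S, ∑ m ∈ M, ∑ n ∈ N, F r s m n
      = ∑ r ∈ R, ∑ m ∈ M, ∑ s ∈ S, ∑ n ∈ N, F r s m n :=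
        Finset.sum_congr rfl fun r _ => Finset.sum_comm
    _ = ∑ m ∈ M, ∑ r ∈ R, ∑ s ∈ S, ∑ n ∈ N, F r s m n := Finset.sum_comm
    _ = ∑ m ∈ M, ∑ r ∈ R, ∑ n ∈ N, ∑ s ∈ S, F r s m n :=
        Finset.sum_congr rfl fun m _ => Finset.sum_congr rfl fun r _ => Finset.sum_comm
    _ = ∑ m ∈ M, ∑ n ∈ N, ∑ r ∈ R, ∑ s ∈ S, F r s m n :=
        Finset.sum_congr rfl fun m _ => Finset.sum_comm

set_option maxHeartbeats 2000000 in
/-- Bivariate product coefficient formula at high indices: with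
`f = ∑_{i=0}^{N_x} ∑_{j=0}^{N_y} a_{i,j} T_i(x) T_j(y)` and
`Q = ∑_{r=0}^{n_{q_1}} ∑_{s=0}^{n_{q_2}} q_{r,s} T_r(x) T_s(y)`, if
`f·Q = ∑_{i,j} b_{i,j} T_i(x) T_j(y)` is the (unique) tensor Chebyshev expansion,
then for all `i ≥ n_{q_1} + 1` and `j ≥ n_{q_2} + 1`,
`b_{i,j} = (1/4) ∑_{r,s} (a_{i-r,j-s} + a_{i-r,j+s} + a_{i+r,j-s} + a_{i+r,j+s}) q_{r,s}`,
with `a_{m,n}` interpreted as `0` when `m > N_x` or `n > N_y`. -/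
theorem bivariate_chebyshev_product_high_coeff (Nx Ny nq1 nq2 : ℕ)
    (a q b : ℕ → ℕ → ℝ) (f Q : MvPolynomial (Fin 2) ℝ)
    (hf : f = ∑ i ∈ Finset.range (Nx + 1), ∑ j ∈ Finset.range (Ny + 1),
        MvPolynomial.C (a i j) *
          Polynomial.aeval (MvPolynomial.X 0) (Polynomial.Chebyshev.T ℝ i) *
          Polynomial.aeval (MvPolynomial.X 1) (Polynomial.Chebyshev.T ℝ j))
    (hQ : Q = ∑ r ∈ Finset.range (nq1 + 1), ∑ s ∈ Finset.range (nq2 + 1),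
        MvPolynomial.C (q r s) *
          Polynomial.aeval (MvPolynomial.X 0) (Polynomial.Chebyshev.T ℝ r) *
          Polynomial.aeval (MvPolynomial.X 1) (Polynomial.Chebyshev.T ℝ s))
    (hb0 : ∀ i j : ℕ, (Nx + nq1 < i ∨ Ny + nq2 < j) → b i j = 0)
    (hexp : f * Q = ∑ i ∈ Finset.range (Nx + nq1 + 1), ∑ j ∈ Finset.range (Ny + nq2 + 1),
        MvPolynomial.C (b i j) *
          Polynomial.aeval (MvPolynomial.X 0) (Polynomial.Chebyshev.T ℝ i) *
          Polynomial.aeval (MvPolynomial.X 1) (Polynomial.Chebyshev.T ℝ j))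
    (i j : ℕ) (hi : nq1 + 1 ≤ i) (hj : nq2 + 1 ≤ j) :
    b i j = (1 / 4) * ∑ r ∈ Finset.range (nq1 + 1), ∑ s ∈ Finset.range (nq2 + 1),
        ((if i - r ≤ Nx ∧ j - s ≤ Ny then a (i - r) (j - s) else 0) +
         (if i - r ≤ Nx ∧ j + s ≤ Ny then a (i - r) (j + s) else 0) +
         (if i + r ≤ Nx ∧ j - s ≤ Ny then a (i + r) (j - s) else 0) +
         (if i + r ≤ Nx ∧ j + s ≤ Ny then a (i + r) (j + s) else 0)) * q r s := by
  by_cases hcase : Nx + nq1 < i ∨ Ny + nq2 < j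
  · rw [hb0 i j hcase]
    symm
    rw [Finset.sum_eq_zero, mul_zero]
    intro r hr
    rw [Finset.sum_eq_zero]
    intro s hs
    simp only [Finset.mem_range] at hr hs
    rcases hcase with hc | hc
    · rw [if_neg (by omega), if_neg (by omega), if_neg (by omega), if_neg (by omega)]
      ring
    · rw [if_neg (by omega), if_neg (by omega), if_neg (by omega), if_neg (by omega)]
      ring
  · push_neg at hcase
    obtain ⟨hiX, hjY⟩ := hcase
    set c : ℕ → ℕ → ℝ := fun m n => ∑ r ∈ Finset.range (nq1+1), ∑ s ∈ Finset.range (nq2+1),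
      q r s * (4⁻¹ * ayc Nx (fun p => ayc Ny (a p) s n) r m) with hc
    have hfq : f * Q = ∑ m ∈ Finset.range (Nx + nq1 + 1), ∑ n ∈ Finset.range (Ny + nq2 + 1),
        MvPolynomial.C (c m n) *
          Polynomial.aeval (MvPolynomial.X 0) (T ℝ (m : ℤ)) *
          Polynomial.aeval (MvPolynomial.X 1) (T ℝ (n : ℤ)) := by
      rw [hQ, Finset.mul_sum]
      have step : ∀ r ∈ Finset.range (nq1+1),
          f * (∑ s ∈ Finset.range (nq2 + 1), MvPolynomial.C (q r s) *
            Polynomial.aeval (MvPolynomial.X 0) (T ℝ (r : ℤ)) *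
            Polynomial.aeval (MvPolynomial.X 1) (T ℝ (s : ℤ)))
          = ∑ s ∈ Finset.range (nq2+1), ∑ m ∈ Finset.range (Nx + nq1 + 1),
              ∑ n ∈ Finset.range (Ny + nq2 + 1),
              MvPolynomial.C (q r s * (4⁻¹ * ayc Nx (fun p => ayc Ny (a p) s n) r m)) *
                Polynomial.aeval (MvPolynomial.X 0) (T ℝ (m : ℤ)) *
                Polynomial.aeval (MvPolynomial.X 1) (T ℝ (n : ℤ)) := by
        intro r hr
        simp only [Finset.mem_range] at hr
        rw [Finset.mul_sum]
        refine Finset.sum_congr rfl fun s hs => ?_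
        simp only [Finset.mem_range] at hs
        have hprod : f * (MvPolynomial.C (q r s) *
            Polynomial.aeval (MvPolynomial.X 0) (T ℝ (r : ℤ)) *
            Polynomial.aeval (MvPolynomial.X 1) (T ℝ (s : ℤ)))
            = MvPolynomial.C (q r s) *
              (f * Polynomial.aeval (MvPolynomial.X 0) (T ℝ (r : ℤ)) *
               Polynomial.aeval (MvPolynomial.X 1) (T ℝ (s : ℤ))) := by ring
        rw [hprod, hf, prodExpand Nx Ny nq1 nq2 a r s (by omega) (by omega)]
        rw [Finset.mul_sum]
        refine Finset.sum_congr rfl fun m _ => ?_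
        rw [Finset.mul_sum]
        refine Finset.sum_congr rfl fun n _ => ?_
        rw [← mul_assoc, ← mul_assoc, ← map_mul]
      rw [Finset.sum_congr rfl step, sum4_swap]
      refine Finset.sum_congr rfl fun m _ => ?_
      refine Finset.sum_congr rfl fun n _ => ?_
      rw [hc]
      simp only [map_sum]
      rw [Finset.sum_mul, Finset.sum_mul]
      refine Finset.sum_congr rfl fun r _ => ?_
      rw [Finset.sum_mul, Finset.sum_mul]
    have h0 : ∑ m ∈ Finset.range (Nx + nq1 + 1), ∑ n ∈ Finset.range (Ny + nq2 + 1),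
        MvPolynomial.C (b m n - c m n) *
          Polynomial.aeval (MvPolynomial.X (0 : Fin 2)) (T ℝ (m : ℤ)) *
          Polynomial.aeval (MvPolynomial.X (1 : Fin 2)) (T ℝ (n : ℤ)) = 0 := by
      have hsub := sub_eq_zero.mpr (hexp.symm.trans hfq)
      calc ∑ m ∈ Finset.range (Nx + nq1 + 1), ∑ n ∈ Finset.range (Ny + nq2 + 1),
          MvPolynomial.C (b m n - c m n) *
            Polynomial.aeval (MvPolynomial.X (0 : Fin 2)) (T ℝ (m : ℤ)) *
            Polynomial.aeval (MvPolynomial.X (1 : Fin 2)) (T ℝ (n : ℤ))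
          = (∑ m ∈ Finset.range (Nx + nq1 + 1), ∑ n ∈ Finset.range (Ny + nq2 + 1),
              MvPolynomial.C (b m n) *
                Polynomial.aeval (MvPolynomial.X (0 : Fin 2)) (T ℝ (m : ℤ)) *
                Polynomial.aeval (MvPolynomial.X (1 : Fin 2)) (T ℝ (n : ℤ)))
            - ∑ m ∈ Finset.range (Nx + nq1 + 1), ∑ n ∈ Finset.range (Ny + nq2 + 1),
              MvPolynomial.C (c m n) *
                Polynomial.aeval (MvPolynomial.X (0 : Fin 2)) (T ℝ (m : ℤ)) *
                Polynomial.aeval (MvPolynomial.X (1 : Fin 2)) (T ℝ (n : ℤ)) := by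
            rw [← Finset.sum_sub_distrib]
            refine Finset.sum_congr rfl fun m _ => ?_
            rw [← Finset.sum_sub_distrib]
            refine Finset.sum_congr rfl fun n _ => ?_
            rw [map_sub]
            ring
        _ = 0 := hsub
    have hbc := linIndepT2 (Nx + nq1 + 1) (Ny + nq2 + 1) _ h0 i (by omega) j (by omega)
    have hbij : b i j = c i j := by linarith
    rw [hbij, hc]
    rw [Finset.mul_sum]
    refine Finset.sum_congr rfl fun r hr => ?_
    rw [Finset.mul_sum]
    refine Finset.sum_congr rfl fun s hs => ?_
    simp only [Finset.mem_range] at hr hs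
    simp only [ayc]
    rw [if_neg (show ¬(1 ≤ i ∧ i ≤ r ∧ r - i ≤ Nx) by omega),
      if_neg (show ¬(1 ≤ j ∧ j ≤ s ∧ s - j ≤ Ny) by omega)]
    have hri : (r ≤ i ∧ i - r ≤ Nx) ↔ (i - r ≤ Nx) := by omega
    have hsj : (s ≤ j ∧ j - s ≤ Ny) ↔ (j - s ≤ Ny) := by omega
    simp only [hri, hsj]
    split_ifs <;> first | ring1 | (exfalso; omega)
end

section
/- Existence of a bivariate Padé–Chebyshev approximant for polynomial data: for every real polynomial f(x, y) in two variables and all integers n_{p_1} ≥ n_{q_1} ≥ 1 and n_{p_2} ≥ n_{q_2} ≥ 1, there exist real bivariate polynomials P and Q with deg_x P ≤ n_{p_1}, deg_y P ≤ n_{p_2}, deg_x Q ≤ n_{q_1}, deg_y Q ≤ n_{q_2}, and Q ≠ 0, such that in the expansion of f·Q − P in the tensor Chebyshev basis {T_i(x) T_j(y)}, the coefficient of T_i(x) T_j(y) vanishes for every (i, j) with 0 ≤ i ≤ n_{p_1} and 0 ≤ j ≤ n_{p_2}, and also for every (i, j) with n_{p_1}+1 ≤ i ≤ n_{p_1}+n_{q_1}+1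 and n_{p_2}+1 ≤ j ≤ n_{p_2}+n_{q_2}+1 except (i, j) = (n_{p_1}+n_{q_1}+1, n_{p_2}+n_{q_2}+1). -/
open Polynomial

set_option maxHeartbeats 1000000

lemma chebAux : ∀ n : ℕ, ((Chebyshev.T ℝ n).degree ≤ (n:ℕ) ∧ (Chebyshev.T ℝ n).coeff n = 2^(n-1)) := by
  have key : ∀ n : ℕ, (((Chebyshev.T ℝ n).degree ≤ (n:ℕ) ∧ (Chebyshev.T ℝ n).coeff n = 2^(n-1)) ∧
      ((Chebyshev.T ℝ (n+1)).degree ≤ ((n+1:ℕ):ℕ) ∧ (Chebyshev.T ℝ (n+1)).coeff (n+1) = 2^n)) := by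
    intro n
    induction n with
    | zero =>
      refine ⟨⟨?_, ?_⟩, ?_, ?_⟩ <;> simp [Chebyshev.T_zero, Chebyshev.T_one]
    | succ n ih =>
      obtain ⟨⟨hd0, hc0⟩, hd1, hc1⟩ := ih
      refine ⟨⟨hd1, hc1⟩, ?_, ?_⟩
      · have h2 : Chebyshev.T ℝ ((n:ℤ)+1+1) = 2 * X * Chebyshev.T ℝ ((n:ℤ)+1) - Chebyshev.T ℝ n :=
          Chebyshev.T_add_two ℝ n
        rw [show ((n+1:ℕ):ℤ)+1 = (n:ℤ)+1+1 by push_cast; ring]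
        rw [h2]
        refine le_trans (degree_sub_le _ _) (max_le ?_ (le_trans hd0 ?_))
        · have h21 : degree (2 * X : ℝ[X]) ≤ 1 := by
            rw [show (2*X:ℝ[X]) = C 2 * X by rw [map_ofNat]]
            exact (degree_C_mul_X two_ne_zero).le
          refine le_trans (le_trans (degree_mul_le _ _) (add_le_add h21 hd1)) ?_
          have : ((1:ℕ):WithBot ℕ) + ((n+1:ℕ):WithBot ℕ) = ((n+1+1:ℕ):WithBot ℕ) := by
            push_cast; ring
          rw [← this]; norm_num
        · exact Nat.cast_le.2 (by omega)
      · have h2 : Chebyshev.T ℝ ((n:ℤ)+1+1) = 2 * X * Chebyshev.T ℝ ((n:ℤ)+1) - Chebyshev.T ℝ n :=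
          Chebyshev.T_add_two ℝ n
        rw [show ((n+1:ℕ):ℤ)+1 = (n:ℤ)+1+1 by push_cast; ring]
        rw [h2, coeff_sub]
        have hz : (Chebyshev.T ℝ n).coeff (n+1+1) = 0 :=
          coeff_eq_zero_of_degree_lt (lt_of_le_of_lt hd0 (Nat.cast_lt.2 (by omega)))
        have : (2 * X * Chebyshev.T ℝ ((n:ℤ)+1)).coeff (n+1+1) = 2 * (Chebyshev.T ℝ ((n:ℤ)+1)).coeff (n+1) := by
          rw [mul_assoc, show (2 : ℝ[X]) = C 2 by rw [map_ofNat], coeff_C_mul, coeff_X_mul]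
        rw [this, hc1, hz]
        ring
  exact fun n => (key n).1

lemma pow_mem_spanT : ∀ n : ℕ, (X : ℝ[X])^n ∈ Submodule.span ℝ (Set.range fun k : ℕ => Chebyshev.T ℝ k) := by
  intro n
  induction n using Nat.strong_induction_on with
  | _ n ih =>
    obtain ⟨hd, hc⟩ := chebAux n
    set c : ℝ := 2^(n-1) with hcdef
    have hc0 : c ≠ 0 := by positivity
    set r : ℝ[X] := Chebyshev.T ℝ n - c • X^n with hr
    have hrc : ∀ k, n ≤ k → r.coeff k = 0 := by
      intro k hk
      rcases eq_or_lt_of_le hk with h | h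
      · simp [hr, ← h, hc, coeff_smul, coeff_X_pow]
      · have h1 : (Chebyshev.T ℝ n).coeff k = 0 :=
          coeff_eq_zero_of_degree_lt (lt_of_le_of_lt hd (Nat.cast_lt.2 h))
        simp [hr, h1, coeff_smul, coeff_X_pow, Nat.ne_of_gt h]
    rcases Nat.eq_zero_or_pos n with h0 | hpos
    · subst h0
      have : (X : ℝ[X])^0 = Chebyshev.T ℝ 0 := by simp [Chebyshev.T_zero]
      rw [this]
      exact Submodule.subset_span ⟨0, rfl⟩
    · have hdr : r.natDegree < n := by
        by_contra hcon
        push_neg at hcon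
        rcases eq_or_ne r 0 with h | h
        · rw [h] at hcon; simp at hcon; omega
        · exact (leadingCoeff_ne_zero.2 h) (hrc _ hcon)
      have hrmem : r ∈ Submodule.span ℝ (Set.range fun k : ℕ => Chebyshev.T ℝ k) := by
        rw [r.as_sum_range' n hdr]
        refine Submodule.sum_mem _ fun k hk => ?_
        rw [← smul_X_eq_monomial]
        exact Submodule.smul_mem _ _ (ih k (Finset.mem_range.1 hk))
      have hX : (X : ℝ[X])^n = c⁻¹ • (Chebyshev.T ℝ n - r) := by
        rw [hr]; rw [sub_sub_cancel, smul_smul, inv_mul_cancel₀ hc0, one_smul]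
      rw [hX]
      exact Submodule.smul_mem _ _ (Submodule.sub_mem _ (Submodule.subset_span ⟨n, rfl⟩) hrmem)

noncomputable def TT (p : ℕ × ℕ) : MvPolynomial (Fin 2) ℝ :=
  Polynomial.aeval (MvPolynomial.X 0) (Chebyshev.T ℝ p.1) *
    Polynomial.aeval (MvPolynomial.X 1) (Chebyshev.T ℝ p.2)

noncomputable def Dsub (a b : ℕ) : Submodule ℝ (MvPolynomial (Fin 2) ℝ) where
  carrier := {g | g.degreeOf 0 ≤ a ∧ g.degreeOf 1 ≤ b}
  zero_mem' := by simp
  add_mem' := by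
    intro x y hx hy
    exact ⟨le_trans (MvPolynomial.degreeOf_add_le _ _ _) (max_le hx.1 hy.1),
      le_trans (MvPolynomial.degreeOf_add_le _ _ _) (max_le hx.2 hy.2)⟩
  smul_mem' := by
    intro c x hx
    constructor
    · refine le_trans ?_ hx.1
      rw [MvPolynomial.degreeOf_eq_sup, MvPolynomial.degreeOf_eq_sup]
      exact Finset.sup_mono MvPolynomial.support_smul
    · refine le_trans ?_ hx.2
      rw [MvPolynomial.degreeOf_eq_sup, MvPolynomial.degreeOf_eq_sup]
      exact Finset.sup_mono MvPolynomial.support_smul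

lemma mem_Dsub_iff {a b : ℕ} {g : MvPolynomial (Fin 2) ℝ} :
    g ∈ Dsub a b ↔ g.degreeOf 0 ≤ a ∧ g.degreeOf 1 ≤ b := Iff.rfl

lemma Dsub_mono {a b a' b' : ℕ} (h1 : a ≤ a') (h2 : b ≤ b') : Dsub a b ≤ Dsub a' b' :=
  fun _ hg => ⟨le_trans hg.1 h1, le_trans hg.2 h2⟩

lemma mul_mem_Dsub {a b c d : ℕ} {x y : MvPolynomial (Fin 2) ℝ}
    (hx : x ∈ Dsub a b) (hy : y ∈ Dsub c d) : x * y ∈ Dsub (a+c) (b+d) :=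
  ⟨le_trans (MvPolynomial.degreeOf_mul_le _ _ _) (add_le_add hx.1 hy.1),
   le_trans (MvPolynomial.degreeOf_mul_le _ _ _) (add_le_add hx.2 hy.2)⟩

lemma degreeOf_X_pow' (s t : Fin 2) (k : ℕ) :
    MvPolynomial.degreeOf t ((MvPolynomial.X s : MvPolynomial (Fin 2) ℝ)^k) = Finsupp.single s k t := by
  rw [MvPolynomial.X_pow_eq_monomial, MvPolynomial.degreeOf_eq_sup,
    MvPolynomial.support_monomial, if_neg one_ne_zero, Finset.sup_singleton]

lemma X_pow_mem_Dsub (s : Fin 2) (k : ℕ) :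
    (MvPolynomial.X s : MvPolynomial (Fin 2) ℝ)^k ∈
      Dsub (Finsupp.single s k 0) (Finsupp.single s k 1) :=
  ⟨(degreeOf_X_pow' s 0 k).le, (degreeOf_X_pow' s 1 k).le⟩

lemma aeval_mem_Dsub (s : Fin 2) (p : ℝ[X]) :
    Polynomial.aeval (MvPolynomial.X s : MvPolynomial (Fin 2) ℝ) p ∈
      Dsub (Finsupp.single s p.natDegree 0) (Finsupp.single s p.natDegree 1) := by
  set N := p.natDegree with hN
  rw [p.as_sum_range' (N + 1) (Nat.lt_succ_self _), map_sum]
  refine Submodule.sum_mem _ fun k hk => ?_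
  rw [Polynomial.aeval_monomial, MvPolynomial.algebraMap_eq, ← MvPolynomial.smul_eq_C_mul]
  refine Submodule.smul_mem _ _ ?_
  have hk' : k ≤ N := by
    have := Finset.mem_range.1 hk; omega
  refine Dsub_mono ?_ ?_ (X_pow_mem_Dsub s k) <;>
    simp [Finsupp.single_apply] <;> split <;> omega

lemma TT_mem_Dsub (p : ℕ × ℕ) : TT p ∈ Dsub p.1 p.2 := by
  have h1 := aeval_mem_Dsub 0 (Chebyshev.T ℝ p.1)
  have h2 := aeval_mem_Dsub 1 (Chebyshev.T ℝ p.2)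
  have hd1 : (Chebyshev.T ℝ p.1).natDegree ≤ p.1 := natDegree_le_iff_degree_le.2 (chebAux p.1).1
  have hd2 : (Chebyshev.T ℝ p.2).natDegree ≤ p.2 := natDegree_le_iff_degree_le.2 (chebAux p.2).1
  have := mul_mem_Dsub h1 h2
  refine Dsub_mono ?_ ?_ this <;> simp [Finsupp.single_apply] <;> omega

lemma mono_eq (d : Fin 2 →₀ ℕ) (c : ℝ) :
    (MvPolynomial.monomial d c : MvPolynomial (Fin 2) ℝ) =
      c • (MvPolynomial.X 0 ^ (d 0) * MvPolynomial.X 1 ^ (d 1)) := by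
  have hd : (Finsupp.single (0:Fin 2) (d 0) + Finsupp.single 1 (d 1)) = d := by
    ext i; fin_cases i <;> simp [Finsupp.single_apply]
  rw [MvPolynomial.X_pow_eq_monomial, MvPolynomial.X_pow_eq_monomial,
    MvPolynomial.monomial_mul, one_mul, hd, MvPolynomial.smul_monomial, smul_eq_mul, mul_one]

lemma X_pow_mul_mem_spanTT (i j : ℕ) :
    (MvPolynomial.X 0 : MvPolynomial (Fin 2) ℝ)^i * MvPolynomial.X 1 ^ j ∈
      Submodule.span ℝ (Set.range TT) := by
  set S1 : Set (MvPolynomial (Fin 2) ℝ) :=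
    (fun q => Polynomial.aeval (MvPolynomial.X 0) q) '' Set.range (fun k : ℕ => Chebyshev.T ℝ k)
  set S2 : Set (MvPolynomial (Fin 2) ℝ) :=
    (fun q => Polynomial.aeval (MvPolynomial.X 1) q) '' Set.range (fun k : ℕ => Chebyshev.T ℝ k)
  have h0 : (MvPolynomial.X 0 : MvPolynomial (Fin 2) ℝ)^i ∈ Submodule.span ℝ S1 := by
    have h := Submodule.mem_map_of_mem
      (f := (Polynomial.aeval (MvPolynomial.X 0 : MvPolynomial (Fin 2) ℝ)).toLinearMap)
      (pow_mem_spanT i)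
    rw [Submodule.map_span] at h
    simpa using h
  have h1 : (MvPolynomial.X 1 : MvPolynomial (Fin 2) ℝ)^j ∈ Submodule.span ℝ S2 := by
    have h := Submodule.mem_map_of_mem
      (f := (Polynomial.aeval (MvPolynomial.X 1 : MvPolynomial (Fin 2) ℝ)).toLinearMap)
      (pow_mem_spanT j)
    rw [Submodule.map_span] at h
    simpa using h
  have hmul := Submodule.mul_mem_mul h0 h1
  rw [Submodule.span_mul_span] at hmul
  refine Submodule.span_mono ?_ hmul
  rintro g hg
  rw [Set.mem_mul] at hg
  obtain ⟨x, ⟨px, ⟨a, rfl⟩, rfl⟩, y, ⟨py, ⟨b, rfl⟩, rfl⟩, rfl⟩ := hg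
  exact ⟨(a, b), rfl⟩

lemma span_TT_top : Submodule.span ℝ (Set.range TT) = ⊤ := by
  rw [eq_top_iff]
  rintro p -
  rw [← p.support_sum_monomial_coeff]
  refine Submodule.sum_mem _ fun d _ => ?_
  rw [mono_eq]
  exact Submodule.smul_mem _ _ (X_pow_mul_mem_spanTT _ _)

lemma Dsub_le_span (a b : ℕ) :
    Dsub a b ≤ Submodule.span ℝ
      ((fun q : ℕ × ℕ => (MvPolynomial.X 0 : MvPolynomial (Fin 2) ℝ)^q.1 * MvPolynomial.X 1^q.2) ''
        (Set.Iic a ×ˢ Set.Iic b)) := by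
  intro p hp
  rw [← p.support_sum_monomial_coeff]
  refine Submodule.sum_mem _ fun d hd => ?_
  rw [mono_eq]
  refine Submodule.smul_mem _ _ (Submodule.subset_span ⟨(d 0, d 1), ⟨?_, ?_⟩, rfl⟩)
  · exact MvPolynomial.degreeOf_le_iff.1 hp.1 d hd
  · exact MvPolynomial.degreeOf_le_iff.1 hp.2 d hd

/-- Existence of a bivariate Padé–Chebyshev approximant for polynomial data: for
every bivariate real polynomial `f` and integers `n_{p_i} ≥ n_{q_i} ≥ 1`, there
are bivariate polynomials `P, Q` with `deg_x P ≤ n_{p_1}`, `deg_y P ≤ n_{p_2}`,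
`deg_x Q ≤ n_{q_1}`, `deg_y Q ≤ n_{q_2}`, `Q ≠ 0`, such that in the tensor
Chebyshev expansion `f·Q − P = ∑_{i,j} η_{i,j} T_i(x) T_j(y)` the coefficient
`η_{i,j}` vanishes for all `(i,j)` with `i ≤ n_{p_1}`, `j ≤ n_{p_2}`, and for all
`(i,j)` in the rectangle `[n_{p_1}+1, n_{p_1}+n_{q_1}+1] × [n_{p_2}+1, n_{p_2}+n_{q_2}+1]`
except its top corner. -/
theorem bivariate_pade_chebyshev_exists (f : MvPolynomial (Fin 2) ℝ)
    (np1 np2 nq1 nq2 : ℕ)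
    (h1 : 1 ≤ nq1) (h2 : nq1 ≤ np1) (h3 : 1 ≤ nq2) (h4 : nq2 ≤ np2) :
    ∃ P Q : MvPolynomial (Fin 2) ℝ,
      P.degreeOf 0 ≤ np1 ∧ P.degreeOf 1 ≤ np2 ∧
      Q.degreeOf 0 ≤ nq1 ∧ Q.degreeOf 1 ≤ nq2 ∧ Q ≠ 0 ∧
      ∃ (M1 M2 : ℕ) (η : ℕ → ℕ → ℝ),
        (f * Q - P = ∑ i ∈ Finset.range (M1 + 1), ∑ j ∈ Finset.range (M2 + 1),
            MvPolynomial.C (η i j) *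
              Polynomial.aeval (MvPolynomial.X 0) (Polynomial.Chebyshev.T ℝ i) *
              Polynomial.aeval (MvPolynomial.X 1) (Polynomial.Chebyshev.T ℝ j)) ∧
        (∀ i j : ℕ, i ≤ np1 → j ≤ np2 → η i j = 0) ∧
        (∀ i j : ℕ, np1 + 1 ≤ i → i ≤ np1 + nq1 + 1 → np2 + 1 ≤ j → j ≤ np2 + nq2 + 1 →
          (i, j) ≠ (np1 + nq1 + 1, np2 + nq2 + 1) → η i j = 0) := by
  classical
  set corner : ℕ × ℕ := (np1+nq1+1, np2+nq2+1) with hcorner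
  set inB : ℕ × ℕ → Prop := fun p =>
    np1+1 ≤ p.1 ∧ p.1 ≤ np1+nq1+1 ∧ np2+1 ≤ p.2 ∧ p.2 ≤ np2+nq2+1 ∧ p ≠ corner with hinB
  set G : Set (ℕ × ℕ) := {p | ¬(p.1 ≤ np1 ∧ p.2 ≤ np2) ∧ ¬ inB p} with hG
  set W : Submodule ℝ (MvPolynomial (Fin 2) ℝ) :=
    Submodule.span ℝ (TT '' {p | ¬ inB p}) with hW
  set V : Submodule ℝ (MvPolynomial (Fin 2) ℝ) := Dsub nq1 nq2 with hV
  set N : ℕ := (nq1+1)*(nq2+1) with hN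
  have hN1 : 1 ≤ N := Nat.mul_pos (by omega) (by omega)
  -- V is finite dimensional with finrank ≥ N
  haveI hVfd : FiniteDimensional ℝ V := by
    haveI := FiniteDimensional.span_of_finite ℝ
      (Set.Finite.image (fun q : ℕ × ℕ => (MvPolynomial.X 0 : MvPolynomial (Fin 2) ℝ)^q.1 * MvPolynomial.X 1^q.2)
        ((Set.finite_Iic nq1).prod (Set.finite_Iic nq2)))
    exact Submodule.finiteDimensional_of_le (Dsub_le_span nq1 nq2)
  have hX0mem : ∀ k : ℕ, (MvPolynomial.X 0 : MvPolynomial (Fin 2) ℝ)^k ∈ Dsub k 0 := by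
    intro k
    have := X_pow_mem_Dsub 0 k
    simpa using this
  have hX1mem : ∀ k : ℕ, (MvPolynomial.X 1 : MvPolynomial (Fin 2) ℝ)^k ∈ Dsub 0 k := by
    intro k
    have := X_pow_mem_Dsub 1 k
    simpa using this
  have hfrV : N ≤ Module.finrank ℝ V := by
    set w : Fin (nq1+1) × Fin (nq2+1) → MvPolynomial (Fin 2) ℝ :=
      fun q => MvPolynomial.X 0 ^ (q.1:ℕ) * MvPolynomial.X 1 ^ (q.2:ℕ) with hw
    have hwmem : ∀ q, w q ∈ V := by
      intro q
      have := mul_mem_Dsub (hX0mem q.1) (hX1mem q.2)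
      simp only [add_zero, zero_add] at this
      exact Dsub_mono (Nat.lt_succ_iff.1 q.1.isLt) (Nat.lt_succ_iff.1 q.2.isLt) this
    have hginj : Function.Injective
        (fun q : Fin (nq1+1) × Fin (nq2+1) =>
          Finsupp.single (0:Fin 2) (q.1:ℕ) + Finsupp.single 1 (q.2:ℕ)) := by
      intro a b hab
      have h0 := DFunLike.congr_fun hab (0 : Fin 2)
      have h1 := DFunLike.congr_fun hab (1 : Fin 2)
      simp [Finsupp.single_apply] at h0 h1
      exact Prod.ext (Fin.val_injective h0) (Fin.val_injective h1)
    have hli : LinearIndependent ℝ w := by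
      have hb := (MvPolynomial.basisMonomials (Fin 2) ℝ).linearIndependent
      have := hb.comp _ hginj
      convert this using 1
      funext q
      simp only [hw, Function.comp_apply, MvPolynomial.coe_basisMonomials,
        MvPolynomial.X_pow_eq_monomial, MvPolynomial.monomial_mul, one_mul]
      all_goals rfl
    have hli' : LinearIndependent ℝ (fun q => (⟨w q, hwmem q⟩ : V)) := by
      refine LinearIndependent.of_comp V.subtype ?_
      exact hli
    have := hli'.fintype_card_le_finrank
    simpa [hN, Nat.mul_comm] using this
  -- the quotient by W is finite dimensional with finrank ≤ N - 1
  set s : Finset (ℕ × ℕ) :=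
    (Finset.Icc (np1+1) (np1+nq1+1) ×ˢ Finset.Icc (np2+1) (np2+nq2+1)).erase corner with hs
  have hsmem : ∀ p : ℕ × ℕ, p ∈ s ↔ inB p := by
    intro p
    simp only [hs, Finset.mem_erase, Finset.mem_product, Finset.mem_Icc, hinB]
    tauto
  have hzero : ∀ p : ℕ × ℕ, p ∉ s → W.mkQ (TT p) = 0 := by
    intro p hp
    rw [Submodule.mkQ_apply, Submodule.Quotient.mk_eq_zero]
    exact Submodule.subset_span ⟨p, by simpa [hsmem] using hp, rfl⟩
  have htop : Submodule.span ℝ (Set.range (W.mkQ ∘ TT)) = ⊤ := by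
    rw [Set.range_comp, ← Submodule.map_span, span_TT_top, Submodule.map_top,
      Submodule.range_mkQ]
  set s' : Finset (MvPolynomial (Fin 2) ℝ ⧸ W) := s.image (W.mkQ ∘ TT) with hs'
  have htop2 : Submodule.span ℝ (s' : Set (MvPolynomial (Fin 2) ℝ ⧸ W)) = ⊤ := by
    rw [eq_top_iff, ← htop, Submodule.span_le]
    rintro _ ⟨p, rfl⟩
    by_cases hp : p ∈ s
    · exact Submodule.subset_span (by
        rw [hs', Finset.coe_image]
        exact ⟨p, hp, rfl⟩)
    · rw [Function.comp_apply, hzero p hp]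
      exact Submodule.zero_mem _
  haveI hQfd : FiniteDimensional ℝ (MvPolynomial (Fin 2) ℝ ⧸ W) :=
    ⟨Submodule.fg_def.mpr ⟨(s' : Set _), s'.finite_toSet, htop2⟩⟩
  have hfrQ : Module.finrank ℝ (MvPolynomial (Fin 2) ℝ ⧸ W) ≤ N - 1 := by
    have hcard : s.card = N - 1 := by
      have hc : corner ∈ (Finset.Icc (np1+1) (np1+nq1+1) ×ˢ Finset.Icc (np2+1) (np2+nq2+1)) := by
        simp only [Finset.mem_product, Finset.mem_Icc, hcorner]; omega
      rw [hs, Finset.card_erase_of_mem hc, Finset.card_product, Nat.card_Icc, Nat.card_Icc]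
      have e1 : np1+nq1+1+1-(np1+1) = nq1+1 := by omega
      have e2 : np2+nq2+1+1-(np2+1) = nq2+1 := by omega
      rw [e1, e2, hN]
    have c1 : Module.finrank ℝ (MvPolynomial (Fin 2) ℝ ⧸ W)
        = Module.finrank ℝ (⊤ : Submodule ℝ (MvPolynomial (Fin 2) ℝ ⧸ W)) := (finrank_top ℝ _).symm
    have c2 : Module.finrank ℝ (⊤ : Submodule ℝ (MvPolynomial (Fin 2) ℝ ⧸ W))
        = Module.finrank ℝ (Submodule.span ℝ (s' : Set (MvPolynomial (Fin 2) ℝ ⧸ W))) := by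
      rw [htop2]
    have c3 : Module.finrank ℝ (Submodule.span ℝ (s' : Set (MvPolynomial (Fin 2) ℝ ⧸ W))) ≤ s'.card :=
      finrank_span_finset_le_card s'
    have c4 : s'.card ≤ s.card := Finset.card_image_le
    omega
  -- the multiplication map
  set L : V →ₗ[ℝ] MvPolynomial (Fin 2) ℝ ⧸ W :=
    W.mkQ ∘ₗ (LinearMap.mulLeft ℝ f) ∘ₗ V.subtype with hL
  have hLni : ¬ Function.Injective L := by
    intro hinj
    have := LinearMap.finrank_le_finrank_of_injective hinj
    omega
  rw [Function.not_injective_iff] at hLni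
  obtain ⟨x, y, hxy, hne⟩ := hLni
  set Q' : V := x - y with hQ'
  have hQ'0 : Q' ≠ 0 := sub_ne_zero.2 hne
  have hLQ' : L Q' = 0 := by rw [hQ', map_sub, hxy, sub_self]
  have hfQW : f * (Q' : MvPolynomial (Fin 2) ℝ) ∈ W := by
    have h0 : W.mkQ (f * (Q' : MvPolynomial (Fin 2) ℝ)) = 0 := hLQ'
    rwa [Submodule.mkQ_apply, Submodule.Quotient.mk_eq_zero] at h0
  -- decompose f * Q' into P + allowed part
  have hWle : W ≤ Submodule.span ℝ (TT '' G) ⊔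
      Submodule.span ℝ (TT '' {p : ℕ × ℕ | p.1 ≤ np1 ∧ p.2 ≤ np2}) := by
    rw [← Submodule.span_union, ← Set.image_union]
    refine Submodule.span_mono (Set.image_mono ?_)
    intro p hp
    by_cases hA : p.1 ≤ np1 ∧ p.2 ≤ np2
    · exact Or.inr hA
    · exact Or.inl ⟨hA, hp⟩
  obtain ⟨r, hr, P, hP, hsum⟩ := Submodule.mem_sup.1 (hWle hfQW)
  have hPD : P ∈ Dsub np1 np2 := by
    refine Submodule.span_le.2 ?_ hP
    rintro _ ⟨p, ⟨hp1, hp2⟩, rfl⟩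
    exact Dsub_mono hp1 hp2 (TT_mem_Dsub p)
  -- extract the coefficients
  obtain ⟨l, hlsupp, hlr⟩ := (Finsupp.mem_span_image_iff_linearCombination ℝ).1 hr
  rw [Finsupp.mem_supported] at hlsupp
  refine ⟨P, (Q' : MvPolynomial (Fin 2) ℝ), (mem_Dsub_iff.1 hPD).1, (mem_Dsub_iff.1 hPD).2, (mem_Dsub_iff.1 Q'.2).1, (mem_Dsub_iff.1 Q'.2).2, ?_,
    l.support.sup Prod.fst, l.support.sup Prod.snd, fun i j => l (i, j), ?_, ?_, ?_⟩
  · simpa [Submodule.coe_eq_zero] using hQ'0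
  · -- the sum identity
    have heq : ∀ i j : ℕ,
        MvPolynomial.C (l (i,j)) *
          Polynomial.aeval (MvPolynomial.X 0) (Chebyshev.T ℝ i) *
          Polynomial.aeval (MvPolynomial.X 1) (Chebyshev.T ℝ j) = l (i,j) • TT (i,j) := by
      intro i j
      rw [mul_assoc, ← MvPolynomial.smul_eq_C_mul]
      rfl
    have hsub : l.support ⊆
        Finset.range (l.support.sup Prod.fst + 1) ×ˢ Finset.range (l.support.sup Prod.snd + 1) := by
      intro p hp
      rw [Finset.mem_product, Finset.mem_range, Finset.mem_range]
      exact ⟨Nat.lt_succ_of_le (Finset.le_sup (f := Prod.fst) hp),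
        Nat.lt_succ_of_le (Finset.le_sup (f := Prod.snd) hp)⟩
    have hrsum : r = ∑ p ∈
        Finset.range (l.support.sup Prod.fst + 1) ×ˢ Finset.range (l.support.sup Prod.snd + 1),
          l p • TT p := by
      rw [← hlr, Finsupp.linearCombination_apply, Finsupp.sum]
      refine Finset.sum_subset hsub ?_
      intro p _ hp
      rw [Finsupp.notMem_support_iff.1 hp, zero_smul]
    have hfQP : f * (Q' : MvPolynomial (Fin 2) ℝ) - P = r := by
      rw [← hsum]; ring
    rw [hfQP, hrsum, Finset.sum_product]
    refine Finset.sum_congr rfl fun i _ => Finset.sum_congr rfl fun j _ => ?_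
    rw [heq]
  · intro i j hi hj
    by_contra hne0
    have : (i, j) ∈ G := hlsupp (Finsupp.mem_support_iff.2 hne0)
    exact this.1 ⟨hi, hj⟩
  · intro i j hi1 hi2 hj1 hj2 hc
    by_contra hne0
    have : (i, j) ∈ G := hlsupp (Finsupp.mem_support_iff.2 hne0)
    exact this.2 ⟨hi1, hi2, hj1, hj2, hc⟩
end
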